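/- arXiv:2010.04539 — 8 statements merged into one kernel-verified Lean document; each statement's English description precedes it below -/
import Mathlib

section
/- Let G be a graph on n vertices and let 1 ≤ k ≤ n−1. If G is connected, then the k-token graph T_k(G) is connected. -/
/-- The `k`-token graph of `G`: vertices are the `k`-subsets of `V(G)`, two subsets
adjacent iff their symmetric difference is an edge of `G`. -/
def tokenGraph {V : Type*} [DecidableEq V] (G : SimpleGraph V) (k : ℕ) :
    SimpleGraph {s : Finset V // s.card = k} where
  Adj A B := ∃ a b, G.Adj a b ∧ symmDiff A.1 B.1 = {a, b}
  symm := by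
    constructor
    rintro A B ⟨a, b, hab, h⟩
    exact ⟨b, a, hab.symm, by rw [symmDiff_comm, h, Finset.pair_comm]⟩
  loopless := by
    constructor
    rintro A ⟨a, b, hab, h⟩
    rw [symmDiff_self] at h
    exact (Finset.insert_ne_empty a {b}) (by simpa using h.symm)

/-- A set of vertices is independent if no two of its members are adjacent. -/
def IndepSet {W : Type*} (G : SimpleGraph W) (s : Set W) : Prop :=
  s.Pairwise fun a b => ¬ G.Adj a b

/-- The independence number of a finite graph. -/
noncomputable def indepNum {W : Type*} [Fintype W] (G : SimpleGraph W) : ℕ := by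
  classical exact Finset.univ.sup fun s : Finset W => if IndepSet G ↑s then s.card else 0

/-- A graph is well-covered if all its maximal independent sets have the same cardinality. -/
def WellCovered {W : Type*} (G : SimpleGraph W) : Prop :=
  ∀ s t : Set W, Maximal (IndepSet G) s → Maximal (IndepSet G) t → s.ncard = t.ncard

lemma card_move {V : Type*} [DecidableEq V] {A : Finset V} {u v : V}
    (hu : u ∈ A) (hv : v ∉ A) : (insert v (A.erase u)).card = A.card := by
  have h1 : v ∉ A.erase u := fun h => hv (Finset.mem_of_mem_erase h)
  have h2 := Finset.card_pos.2 ⟨u, hu⟩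
  rw [Finset.card_insert_of_notMem h1, Finset.card_erase_of_mem hu]
  omega

lemma tg_adj {V : Type*} [DecidableEq V] {G : SimpleGraph V} {k : ℕ}
    {A B : {s : Finset V // s.card = k}} {u v : V}
    (hu : u ∈ A.1) (hv : v ∉ A.1) (h : G.Adj u v)
    (hB : B.1 = insert v (A.1.erase u)) : (tokenGraph G k).Adj A B := by
  refine ⟨u, v, h, ?_⟩
  have hne := h.ne
  ext x
  simp only [Finset.mem_symmDiff, hB, Finset.mem_insert, Finset.mem_erase,
    Finset.mem_singleton]
  by_cases h1 : x = u <;> by_cases h2 : x = v <;> subst_eqs <;> simp_all <;> tauto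

lemma tg_move {V : Type*} [DecidableEq V] {G : SimpleGraph V} {k : ℕ} {u v : V}
    (p : G.Walk u v) :
    ∀ (A B : {s : Finset V // s.card = k}), u ∈ A.1 → v ∉ A.1 →
      B.1 = insert v (A.1.erase u) → (tokenGraph G k).Reachable A B := by
  induction p with
  | nil =>
    intro A B hu hv hB
    exact absurd hu hv
  | @cons u w v h q ih =>
    intro A B hu hv hB
    have huv : u ≠ v := fun e => hv (e ▸ hu)
    by_cases hw : w ∈ A.1
    · have hwv : w ≠ v := fun e => hv (e ▸ hw)
      have hcard : (insert v (A.1.erase w)).card = k := by rw [card_move hw hv, A.2]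
      set A' : {s : Finset V // s.card = k} := ⟨insert v (A.1.erase w), hcard⟩ with hA'
      have r1 : (tokenGraph G k).Reachable A A' := ih A A' hw hv rfl
      have hu' : u ∈ A'.1 := by
        simp only [hA', Finset.mem_insert, Finset.mem_erase]
        exact Or.inr ⟨h.ne, hu⟩
      have hw' : w ∉ A'.1 := by
        simp only [hA', Finset.mem_insert, Finset.mem_erase]
        rintro (rfl | ⟨hc, _⟩) <;> simp_all
      have hB' : B.1 = insert w (A'.1.erase u) := by
        rw [hB]
        ext x
        simp only [hA', Finset.mem_insert, Finset.mem_erase]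
        by_cases h1 : x = u <;> by_cases h2 : x = v <;> by_cases h3 : x = w <;>
          subst_eqs <;> simp_all <;> tauto
      exact r1.trans (tg_adj hu' hw' h hB').reachable
    · by_cases hwv : w = v
      · subst hwv
        exact (tg_adj hu hv h hB).reachable
      · have hcard : (insert w (A.1.erase u)).card = k := by rw [card_move hu hw, A.2]
        set A' : {s : Finset V // s.card = k} := ⟨insert w (A.1.erase u), hcard⟩ with hA'
        have r1 : (tokenGraph G k).Adj A A' := tg_adj hu hw h rfl
        have hw'' : w ∈ A'.1 := Finset.mem_insert_self _ _
        have hv' : v ∉ A'.1 := by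
          simp only [hA', Finset.mem_insert, Finset.mem_erase]
          rintro (rfl | ⟨_, hc⟩) <;> simp_all
        have hB' : B.1 = insert v (A'.1.erase w) := by
          rw [hB]
          ext x
          simp only [hA', Finset.mem_insert, Finset.mem_erase]
          by_cases h1 : x = u <;> by_cases h2 : x = v <;> by_cases h3 : x = w <;>
            subst_eqs <;> simp_all <;> tauto
        exact r1.reachable.trans (ih A' B hw'' hv' hB')

theorem stmt0 {V : Type*} [Fintype V] [DecidableEq V] (G : SimpleGraph V) (k : ℕ)
    (hk1 : 1 ≤ k) (hk2 : k ≤ Fintype.card V - 1) (hG : G.Connected) :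
    (tokenGraph G k).Connected := by
  have hkV : k ≤ Fintype.card V := by
    rcases Nat.eq_zero_or_pos (Fintype.card V) with h | h <;> omega
  rw [SimpleGraph.connected_iff]
  constructor
  · suffices H : ∀ n (A B : {s : Finset V // s.card = k}), (A.1 \ B.1).card = n →
        (tokenGraph G k).Reachable A B by
      intro A B; exact H _ A B rfl
    intro n
    induction n using Nat.strong_induction_on with
    | _ n ihn =>
      intro A B hn
      rcases Nat.eq_zero_or_pos n with rfl | hpos
      · have : A.1 ⊆ B.1 := by
          rw [← Finset.sdiff_eq_empty_iff_subset]
          exact Finset.card_eq_zero.mp hn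
        have : A = B := Subtype.ext (Finset.eq_of_subset_of_card_le this (by rw [A.2, B.2]))
        exact this ▸ SimpleGraph.Reachable.refl A
      · have hAB : (A.1 \ B.1).Nonempty := Finset.card_pos.mp (by omega)
        obtain ⟨a, ha⟩ := hAB
        have hcards : (B.1 \ A.1).card = n := by
          rw [Finset.card_sdiff_comm (B.2.trans A.2.symm), hn]
        have hBA : (B.1 \ A.1).Nonempty := Finset.card_pos.mp (by omega)
        obtain ⟨b, hb⟩ := hBA
        obtain ⟨haA, haB⟩ := Finset.mem_sdiff.mp ha
        obtain ⟨hbB, hbA⟩ := Finset.mem_sdiff.mp hb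
        obtain ⟨p⟩ := hG.preconnected a b
        have hcard : (insert b (A.1.erase a)).card = k := by rw [card_move haA hbA, A.2]
        set A' : {s : Finset V // s.card = k} := ⟨insert b (A.1.erase a), hcard⟩ with hA'
        have r1 : (tokenGraph G k).Reachable A A' := tg_move p A A' haA hbA rfl
        have hstep : A'.1 \ B.1 = (A.1 \ B.1).erase a := by
          ext x
          simp only [hA', Finset.mem_sdiff, Finset.mem_insert, Finset.mem_erase]
          constructor
          · rintro ⟨rfl | ⟨hx, hx2⟩, hx3⟩
            · exact absurd hbB hx3
            · exact ⟨hx, hx2, hx3⟩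
          · rintro ⟨hx, hx2, hx3⟩
            exact ⟨Or.inr ⟨hx, hx2⟩, hx3⟩
        have : (A'.1 \ B.1).card < n := by
          rw [hstep, Finset.card_erase_of_mem ha, hn]; omega
        exact r1.trans (ihn _ this A' B rfl)
  · obtain ⟨s, -, hs⟩ := Finset.exists_subset_card_eq (s := (Finset.univ : Finset V)) (n := k)
      (by simpa using hkV)
    exact ⟨⟨s, hs⟩⟩
end

section
/- Let G be a graph on n vertices with no isolated vertices and let 2 ≤ k ≤ ⌊n/2⌋. Then the independence number of T_k(G) satisfies α(T_k(G)) ≤ (1/k)·C(n, k−1)·α(G), where C(n,k−1) is the binomial coefficient. -/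
lemma indepNum_spec {W : Type*} [Fintype W] (G : SimpleGraph W) :
    ∃ s : Finset W, IndepSet G ↑s ∧ s.card = indepNum G := by
  classical
  unfold indepNum
  obtain ⟨s, -, hs⟩ := Finset.exists_mem_eq_sup (Finset.univ : Finset (Finset W))
    ⟨∅, Finset.mem_univ _⟩ (fun s : Finset W => if IndepSet G ↑s then s.card else 0)
  by_cases h : IndepSet G ↑s
  · exact ⟨s, h, by rw [hs, if_pos h]⟩
  · refine ⟨∅, by simp [IndepSet], ?_⟩
    rw [hs, if_neg h]
    simp

lemma card_le_indepNum {W : Type*} [Fintype W] (G : SimpleGraph W) {s : Finset W}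
    (h : IndepSet G ↑s) : s.card ≤ indepNum G := by
  classical
  unfold indepNum
  have := Finset.le_sup (f := fun s : Finset W => if IndepSet G ↑s then s.card else 0)
    (Finset.mem_univ s)
  simpa only [if_pos h] using this

theorem stmt2 {V : Type*} [Fintype V] [DecidableEq V] (G : SimpleGraph V) (k : ℕ)
    (hiso : ∀ v : V, ∃ w, G.Adj v w)
    (hk1 : 2 ≤ k) (hk2 : k ≤ Fintype.card V / 2) :
    k * indepNum (tokenGraph G k) ≤ (Fintype.card V).choose (k - 1) * indepNum G := by
  classical
  obtain ⟨𝒜, h𝒜, hcard⟩ := indepNum_spec (tokenGraph G k)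
  rw [← hcard]
  have hk0 : 1 ≤ k := by omega
  -- Step 1: double counting
  have step1 : 𝒜.card * k = ∑ B ∈ (Finset.univ : Finset V).powersetCard (k-1),
      (𝒜.filter fun A => B ⊆ A.1).card := by
    calc 𝒜.card * k = ∑ _A ∈ 𝒜, k := by rw [Finset.sum_const, smul_eq_mul]
    _ = ∑ A ∈ 𝒜, (((Finset.univ : Finset V).powersetCard (k-1)).filter
          fun B => B ⊆ A.1).card := by
        refine Finset.sum_congr rfl fun A _ => ?_
        have he : (((Finset.univ : Finset V).powersetCard (k-1)).filter
            fun B => B ⊆ A.1) = A.1.powersetCard (k-1) := by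
          ext B
          simp only [Finset.mem_filter, Finset.mem_powersetCard, Finset.subset_univ,
            true_and]
          tauto
        rw [he, Finset.card_powersetCard, A.2, Nat.choose_symm hk0, Nat.choose_one_right]
    _ = _ := by
        simp only [Finset.card_filter]
        exact Finset.sum_comm
  -- Step 2: each summand is at most indepNum G
  have step2 : ∀ B ∈ (Finset.univ : Finset V).powersetCard (k-1),
      (𝒜.filter fun A => B ⊆ A.1).card ≤ indepNum G := by
    intro B hB
    rw [Finset.mem_powersetCard] at hB
    obtain ⟨-, hBcard⟩ := hB
    by_cases hfil : (𝒜.filter fun A => B ⊆ A.1) = ∅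
    · simp [hfil]
    obtain ⟨A₀, hA₀⟩ := Finset.nonempty_iff_ne_empty.mpr hfil
    have hV : Nonempty V := by
      have : A₀.1.Nonempty := Finset.card_pos.mp (by rw [A₀.2]; omega)
      exact ⟨this.choose⟩
    have hInh : Inhabited V := Classical.inhabited_of_nonempty hV
    obtain ⟨f, hmem⟩ : ∃ f : {s : Finset V // s.card = k} → V,
        ∀ A : {s : Finset V // s.card = k}, B ⊆ A.1 → A.1 \ B = {f A} := by
      refine ⟨fun A => if h : (A.1 \ B).Nonempty then h.choose else default, ?_⟩
      intro A hBA
      have hc : (A.1 \ B).card = 1 := by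
        rw [Finset.card_sdiff_of_subset hBA, A.2, hBcard]; omega
      have hne : (A.1 \ B).Nonempty := Finset.card_pos.mp (by omega)
      have hfm : (if h : (A.1 \ B).Nonempty then h.choose else default) ∈ A.1 \ B := by
        simp only [dif_pos hne]; exact hne.choose_spec
      exact Finset.eq_singleton_iff_unique_mem.mpr
        ⟨hfm, fun x hx => Finset.card_le_one.mp (by omega) x hx _ hfm⟩
    have hrepr : ∀ A : {s : Finset V // s.card = k}, B ⊆ A.1 →
        A.1 = insert (f A) B := by
      intro A hBA
      have := Finset.sdiff_union_of_subset hBA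
      rw [hmem A hBA] at this
      rw [Finset.insert_eq, ← this]
    have hfB : ∀ A : {s : Finset V // s.card = k}, B ⊆ A.1 → f A ∉ B := by
      intro A hBA
      have : f A ∈ A.1 \ B := by rw [hmem A hBA]; exact Finset.mem_singleton_self _
      exact (Finset.mem_sdiff.mp this).2
    -- f is injective on the filter
    have hinj : Set.InjOn f ↑(𝒜.filter fun A => B ⊆ A.1) := by
      intro A₁ hA₁ A₂ hA₂ hEq
      rw [Finset.mem_coe, Finset.mem_filter] at hA₁ hA₂
      apply Subtype.ext
      rw [hrepr A₁ hA₁.2, hrepr A₂ hA₂.2, hEq]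
    -- the image is independent in G
    have hind : IndepSet G ↑((𝒜.filter fun A => B ⊆ A.1).image f) := by
      intro a ha b hb hab hadj
      rw [Finset.coe_image, Set.mem_image] at ha hb
      obtain ⟨A₁, hA₁, rfl⟩ := ha
      obtain ⟨A₂, hA₂, rfl⟩ := hb
      rw [Finset.mem_coe, Finset.mem_filter] at hA₁ hA₂
      have hne : A₁ ≠ A₂ := fun h => hab (by rw [h])
      have haB : f A₁ ∉ B := hfB A₁ hA₁.2
      have hbB : f A₂ ∉ B := hfB A₂ hA₂.2
      have h1 : A₁.1 = insert (f A₁) B := hrepr A₁ hA₁.2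
      have h2 : A₂.1 = insert (f A₂) B := hrepr A₂ hA₂.2
      refine h𝒜 (Finset.mem_coe.mpr hA₁.1) (Finset.mem_coe.mpr hA₂.1) hne
        ⟨f A₁, f A₂, hadj, ?_⟩
      ext x
      simp only [Finset.mem_symmDiff, h1, h2, Finset.mem_insert, Finset.mem_singleton]
      constructor
      · rintro (⟨hx, hx'⟩ | ⟨hx, hx'⟩) <;> tauto
      · rintro (rfl | rfl) <;> tauto
    calc (𝒜.filter fun A => B ⊆ A.1).card
        = ((𝒜.filter fun A => B ⊆ A.1).image f).card :=
          (Finset.card_image_of_injOn hinj).symm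
      _ ≤ indepNum G := card_le_indepNum G hind
  calc k * 𝒜.card = 𝒜.card * k := Nat.mul_comm _ _
    _ = _ := step1
    _ ≤ ∑ _B ∈ (Finset.univ : Finset V).powersetCard (k-1), indepNum G :=
        Finset.sum_le_sum step2
    _ = (Fintype.card V).choose (k - 1) * indepNum G := by
        rw [Finset.sum_const, smul_eq_mul, Finset.card_powersetCard, Finset.card_univ]
end

section
/- Let G be a graph containing pairwise disjoint independent sets V_1, V_2, …, V_k with k even. Then V_1V_2 ∪ V_3V_4 ∪ ⋯ ∪ V_{k−1}V_k is an independent set of T_2(G), where V_iV_j = { {x,y} : x ∈ V_i, y ∈ V_j, x ≠ y }. -/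
theorem stmt7 {V : Type*} [DecidableEq V] (G : SimpleGraph V) (k : ℕ) (hk : Even k)
    (Vs : ℕ → Set V) (hind : ∀ i < k, IndepSet G (Vs i))
    (hdisj : ∀ i < k, ∀ j < k, i ≠ j → Disjoint (Vs i) (Vs j)) :
    IndepSet (tokenGraph G 2)
      {A : {s : Finset V // s.card = 2} | ∃ i, 2 * i + 1 < k ∧
        ∃ x ∈ Vs (2 * i), ∃ y ∈ Vs (2 * i + 1), x ≠ y ∧ A.1 = {x, y}} := by
  rintro ⟨A, hA2⟩ ⟨i, hi, x, hx, y, hy, hxy, hAxy⟩ ⟨B, hB2⟩ ⟨j, hj, x', hx', y', hy', hxy', hBxy⟩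
    hne hadj
  obtain ⟨a, b, hab, hsd⟩ := hadj
  simp only at hAxy hBxy hsd
  subst hAxy hBxy
  have hne' : ∀ p q (u v : V), p < k → q < k → p ≠ q → u ∈ Vs p → v ∈ Vs q → u ≠ v := by
    intro p q u v hp hq hpq hu hv h
    exact Set.disjoint_left.mp (hdisj p hp q hq hpq) hu (h ▸ hv)
  have tri : ∀ u v w : V, u ≠ v → u ≠ w → v ≠ w → u ∈ ({a, b} : Finset V) →
      v ∈ ({a, b} : Finset V) → w ∈ ({a, b} : Finset V) → False := by
    intro u v w h1 h2 h3 hu hv hw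
    simp only [Finset.mem_insert, Finset.mem_singleton] at hu hv hw
    rcases hu with rfl | rfl <;> rcases hv with rfl | rfl <;> rcases hw with rfl | rfl <;>
      simp_all
  have pair : ∀ u v : V, u ∈ ({a, b} : Finset V) → v ∈ ({a, b} : Finset V) → u ≠ v →
      G.Adj u v := by
    intro u v hu hv huv
    simp only [Finset.mem_insert, Finset.mem_singleton] at hu hv
    rcases hu with rfl | rfl <;> rcases hv with rfl | rfl <;>
      first | exact hab | exact hab.symm | simp_all
  have memsd : ∀ u : V, (u ∈ ({x, y} : Finset V) ∧ u ∉ ({x', y'} : Finset V)) ∨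
      (u ∈ ({x', y'} : Finset V) ∧ u ∉ ({x, y} : Finset V)) → u ∈ ({a, b} : Finset V) := by
    intro u hu
    rw [← hsd]
    exact Finset.mem_symmDiff.mpr hu
  have hik : 2 * i < k := by omega
  have hjk : 2 * j < k := by omega
  have hxy'ne : x ≠ y' := hne' (2 * i) (2 * j + 1) x y' hik hj (by omega) hx hy'
  have hx'yne : x' ≠ y := hne' (2 * j) (2 * i + 1) x' y hjk hi (by omega) hx' hy
  by_cases hij : i = j
  · subst hij
    by_cases hxx : x = x'
    · by_cases hyy : y = y'
      · exact hne (by subst hxx hyy; rfl)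
      · -- symmDiff contains y and y', both in Vs (2i+1)
        have hy1 : y ∈ ({a, b} : Finset V) := memsd y (Or.inl ⟨by simp,
          by simp [hx'yne.symm, hyy]⟩)
        have hy2 : y' ∈ ({a, b} : Finset V) := memsd y' (Or.inr ⟨by simp,
          by simp [hxy'ne.symm, Ne.symm hyy]⟩)
        exact hind (2 * i + 1) hi hy hy' hyy (pair y y' hy1 hy2 hyy)
    · by_cases hyy : y = y'
      · have hx1 : x ∈ ({a, b} : Finset V) := memsd x (Or.inl ⟨by simp,
          by simp [hxx, hxy'ne]⟩)
        have hx2 : x' ∈ ({a, b} : Finset V) := memsd x' (Or.inr ⟨by simp,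
          by simp [Ne.symm hxx, hx'yne]⟩)
        exact hind (2 * i) hik hx hx' hxx (pair x x' hx1 hx2 hxx)
      · -- all four distinct: x, y, x' distinct, all in {a,b}
        have h1 : x ∈ ({a, b} : Finset V) := memsd x (Or.inl ⟨by simp, by simp [hxx, hxy'ne]⟩)
        have h2 : y ∈ ({a, b} : Finset V) := memsd y (Or.inl ⟨by simp,
          by simp [hx'yne.symm, hyy]⟩)
        have h3 : x' ∈ ({a, b} : Finset V) := memsd x' (Or.inr ⟨by simp,
          by simp [Ne.symm hxx, hx'yne]⟩)
        exact tri x y x' hxy hxx (Ne.symm hx'yne) h1 h2 h3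
  · -- i ≠ j: all four blocks distinct, all four vertices distinct
    have hxx : x ≠ x' := hne' (2 * i) (2 * j) x x' hik hjk (by omega) hx hx'
    have hyy : y ≠ y' := hne' (2 * i + 1) (2 * j + 1) y y' hi hj (by omega) hy hy'
    have h1 : x ∈ ({a, b} : Finset V) := memsd x (Or.inl ⟨by simp, by simp [hxx, hxy'ne]⟩)
    have h2 : y ∈ ({a, b} : Finset V) := memsd y (Or.inl ⟨by simp,
      by simp [hx'yne.symm, hyy]⟩)
    have h3 : x' ∈ ({a, b} : Finset V) := memsd x' (Or.inr ⟨by simp,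
      by simp [Ne.symm hxx, hx'yne]⟩)
    exact tri x y x' hxy hxx (Ne.symm hx'yne) h1 h2 h3
end

section
/- Let G be a connected bipartite graph with bipartition V(G) = L ∪ R, and let k ≥ 1. Then T_k(G) is bipartite with bipartition given by { A ∈ V(T_k(G)) : |A ∩ R| is even } and { A ∈ V(T_k(G)) : |A ∩ R| is odd }. -/
lemma card_add_card_parity {V : Type*} [DecidableEq V] (s t : Finset V) :
    s.card + t.card = (symmDiff s t).card + 2 * (s ∩ t).card := by
  have h : symmDiff s t = (s \ t) ∪ (t \ s) := rfl
  rw [h, Finset.card_union_of_disjoint (Finset.sdiff_disjoint.mono_right Finset.sdiff_subset)]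
  have h1 := Finset.card_sdiff_add_card_inter s t
  have h2 := Finset.card_sdiff_add_card_inter t s
  rw [Finset.inter_comm] at h2
  omega

theorem stmt10 {V : Type*} [Fintype V] [DecidableEq V] (G : SimpleGraph V) (k : ℕ)
    (hk : 1 ≤ k) (L R : Finset V) (hG : G.Connected)
    (hunion : L ∪ R = Finset.univ) (hdisj : Disjoint L R)
    (hbip : ∀ a b, G.Adj a b → (a ∈ L ∧ b ∈ R) ∨ (a ∈ R ∧ b ∈ L))
    (A B : {s : Finset V // s.card = k}) (hAB : (tokenGraph G k).Adj A B) :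
    Even ((A.1 ∩ R).card) ↔ ¬ Even ((B.1 ∩ R).card) := by
  obtain ⟨a, b, hab, h⟩ := hAB
  have hd : symmDiff (A.1 ∩ R) (B.1 ∩ R) = ({a, b} : Finset V) ∩ R := by
    simp only [← Finset.inf_eq_inter, ← inf_symmDiff_distrib_right, h]
  have hcard : (({a, b} : Finset V) ∩ R).card = 1 := by
    rcases hbip a b hab with ⟨ha, hb⟩ | ⟨ha, hb⟩
    · have haR : a ∉ R := fun hr => Finset.disjoint_left.mp hdisj ha hr
      have : ({a, b} : Finset V) ∩ R = {b} := by
        ext x; simp only [Finset.mem_inter, Finset.mem_insert, Finset.mem_singleton]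
        constructor
        · rintro ⟨rfl | rfl, hx⟩ <;> [exact absurd hx haR; rfl]
        · rintro rfl; exact ⟨Or.inr rfl, hb⟩
      simp [this]
    · have hbR : b ∉ R := fun hr => Finset.disjoint_left.mp hdisj hb hr
      have : ({a, b} : Finset V) ∩ R = {a} := by
        ext x; simp only [Finset.mem_inter, Finset.mem_insert, Finset.mem_singleton]
        constructor
        · rintro ⟨rfl | rfl, hx⟩ <;> [rfl; exact absurd hx hbR]
        · rintro rfl; exact ⟨Or.inl rfl, ha⟩
      simp [this]
  have := card_add_card_parity (A.1 ∩ R) (B.1 ∩ R)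
  rw [hd, hcard] at this
  rw [Nat.even_iff, Nat.even_iff]
  omega
end

section
/- Let G be a connected bipartite graph with bipartition V(G) = L ∪ R, with |L| ≥ k ≥ 2. If A is a vertex of T_k(G) with A ⊆ L (i.e., |A ∩ L| = k), then A has degree at least 2 in T_k(G). -/
lemma exists_adj_of_ne {V : Type*} (G : SimpleGraph V) (hG : G.Connected)
    {a a' : V} (h : a ≠ a') : ∃ b, G.Adj a b := by
  obtain ⟨w⟩ := hG a a'
  cases w with
  | nil => exact absurd rfl h
  | cons hadj _ => exact ⟨_, hadj⟩

theorem stmt12 {V : Type*} [Fintype V] [DecidableEq V] (G : SimpleGraph V) (k : ℕ)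
    (L R : Finset V) (hG : G.Connected)
    (hunion : L ∪ R = Finset.univ) (hdisj : Disjoint L R)
    (hbip : ∀ a b, G.Adj a b → (a ∈ L ∧ b ∈ R) ∨ (a ∈ R ∧ b ∈ L))
    (hk : 2 ≤ k) (hL : k ≤ L.card)
    (A : {s : Finset V // s.card = k}) (hA : A.1 ⊆ L) :
    2 ≤ ((tokenGraph G k).neighborSet A).ncard := by
  obtain ⟨a1, ha1, a2, ha2, hne⟩ := Finset.one_lt_card.mp (by omega : 1 < A.1.card)
  -- neighbors in G
  have step : ∀ a ∈ A.1, ∀ a' ∈ A.1, a ≠ a' →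
      ∃ B : {s : Finset V // s.card = k}, (tokenGraph G k).Adj A B ∧
        a ∉ B.1 ∧ ∀ x ∈ A.1, x ≠ a → x ∈ B.1 := by
    intro a ha a' ha' hne'
    obtain ⟨b, hab⟩ := exists_adj_of_ne G hG hne'
    have hbR : b ∈ R := by
      rcases hbip a b hab with ⟨_, h⟩ | ⟨h, _⟩
      · exact h
      · exact absurd (hA ha) (Finset.disjoint_right.mp hdisj h)
    have hbA : b ∉ A.1 := fun hb => Finset.disjoint_left.mp hdisj (hA hb) hbR
    have hba : b ≠ a := fun h => hbA (h ▸ ha)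
    refine ⟨⟨insert b (A.1.erase a), ?_⟩, ⟨a, b, hab, ?_⟩, ?_, ?_⟩
    · rw [Finset.card_insert_of_notMem (fun h => hbA (Finset.mem_of_mem_erase h)),
        Finset.card_erase_of_mem ha, A.2]
      omega
    · ext x
      simp only [Finset.mem_symmDiff, Finset.mem_insert, Finset.mem_erase,
        Finset.mem_singleton]
      constructor
      · rintro (⟨hx, hx2⟩ | ⟨(rfl | ⟨hxa, hx2⟩), hx3⟩)
        · push_neg at hx2
          left; by_contra h; exact (hx2.2 h) hx
        · right; rfl
        · exact absurd hx2 hx3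
      · rintro (rfl | rfl)
        · exact Or.inl ⟨ha, by simp [hba.symm]⟩
        · exact Or.inr ⟨Or.inl rfl, hbA⟩
    · simp only [Finset.mem_insert, Finset.mem_erase]
      push_neg
      exact ⟨hba.symm, fun h _ => absurd rfl h⟩
    · intro x hx hxa
      simp [Finset.mem_insert, Finset.mem_erase, hxa, hx]
  obtain ⟨B1, hB1, ha1B1, hB1mem⟩ := step a1 ha1 a2 ha2 hne
  obtain ⟨B2, hB2, ha2B2, hB2mem⟩ := step a2 ha2 a1 ha1 hne.symm
  have hB12 : B1 ≠ B2 := by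
    intro h
    exact ha1B1 (h ▸ hB2mem a1 ha1 hne)
  have hsub : {B1, B2} ⊆ (tokenGraph G k).neighborSet A := by
    rintro x (rfl | rfl) <;> assumption
  calc 2 = ({B1, B2} : Set _).ncard := (Set.ncard_pair hB12).symm
    _ ≤ _ := Set.ncard_le_ncard hsub (Set.toFinite _)
end

section
/- Let G be a connected bipartite graph with bipartition V(G) = L ∪ R, |L| ≥ k ≥ 2 and |R| ≥ 1. If A_1 and A_2 are distinct vertices of T_k(G) with A_1 ⊆ L and A_2 ⊆ L, then A_1 is not an isolated vertex of the graph T_k(G) ∖ N[A_2] obtained by deleting the closed neighbourhood of A_2. -/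
theorem stmt13 {V : Type*} [Fintype V] [DecidableEq V] (G : SimpleGraph V) (k : ℕ)
    (L R : Finset V) (hG : G.Connected)
    (hunion : L ∪ R = Finset.univ) (hdisj : Disjoint L R)
    (hbip : ∀ a b, G.Adj a b → (a ∈ L ∧ b ∈ R) ∨ (a ∈ R ∧ b ∈ L))
    (hk : 2 ≤ k) (hL : k ≤ L.card) (hR : R.Nonempty)
    (A₁ A₂ : {s : Finset V // s.card = k}) (hne : A₁ ≠ A₂)
    (hA₁ : A₁.1 ⊆ L) (hA₂ : A₂.1 ⊆ L) :
    A₁ ∉ insert A₂ ((tokenGraph G k).neighborSet A₂) ∧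
      ∃ B, B ∉ insert A₂ ((tokenGraph G k).neighborSet A₂) ∧
        (tokenGraph G k).Adj A₁ B := by
  classical
  have hLR : ∀ x, x ∈ L → x ∉ R := fun x hx => Finset.disjoint_left.mp hdisj hx
  -- no adjacency between subsets of L
  have key : ∀ X Y : {s : Finset V // s.card = k}, X.1 ⊆ L → Y.1 ⊆ L →
      ¬ (tokenGraph G k).Adj X Y := by
    rintro X Y hX hY ⟨a, b, hab, hsd⟩
    have hbmem : b ∈ symmDiff X.1 Y.1 := by rw [hsd]; simp
    have hamem : a ∈ symmDiff X.1 Y.1 := by rw [hsd]; simp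
    rw [Finset.mem_symmDiff] at hbmem hamem
    rcases hbip a b hab with ⟨ha, hb⟩ | ⟨ha, hb⟩
    · rcases hbmem with ⟨h1, _⟩ | ⟨h1, _⟩
      · exact hLR b (hX h1) hb
      · exact hLR b (hY h1) hb
    · rcases hamem with ⟨h1, _⟩ | ⟨h1, _⟩
      · exact hLR a (hX h1) ha
      · exact hLR a (hY h1) ha
  have hA12 : A₁.1 ≠ A₂.1 := fun h => hne (Subtype.ext h)
  -- choose a ∈ A₁ lying in A₂ when the intersection is nonempty
  obtain ⟨a, haA₁, hkey⟩ : ∃ a ∈ A₁.1, (A₁.1 ∩ A₂.1).Nonempty → a ∈ A₂.1 := by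
    by_cases h : (A₁.1 ∩ A₂.1).Nonempty
    · obtain ⟨a, ha⟩ := h
      exact ⟨a, (Finset.mem_inter.mp ha).1, fun _ => (Finset.mem_inter.mp ha).2⟩
    · obtain ⟨a, ha⟩ : A₁.1.Nonempty := Finset.card_pos.mp (by rw [A₁.2]; omega)
      exact ⟨a, ha, fun hh => absurd hh h⟩
  have haL : a ∈ L := hA₁ haA₁
  -- a has a neighbour r ∈ R
  obtain ⟨v, hvR⟩ := hR
  have hva : v ≠ a := fun h => hLR a haL (h ▸ hvR)
  obtain ⟨r, har⟩ : ∃ r, G.Adj a r := by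
    obtain ⟨w⟩ := hG.preconnected a v
    cases w with
    | nil => exact absurd rfl hva
    | cons h p => exact ⟨_, h⟩
  have hrR : r ∈ R := by
    rcases hbip a r har with ⟨_, h⟩ | ⟨h, _⟩
    · exact h
    · exact absurd h (hLR a haL)
  have hrL : r ∉ L := fun h => hLR r h hrR
  have har' : a ≠ r := fun h => hrL (h ▸ haL)
  have hrA₁ : r ∉ A₁.1 := fun h => hrL (hA₁ h)
  have hrA₂ : r ∉ A₂.1 := fun h => hrL (hA₂ h)
  set Bs : Finset V := insert r (A₁.1.erase a) with hBs
  have hBcard : Bs.card = k := by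
    have h1 : r ∉ A₁.1.erase a := fun h => hrA₁ (Finset.mem_of_mem_erase h)
    rw [hBs, Finset.card_insert_of_notMem h1, Finset.card_erase_of_mem haA₁, A₁.2]
    omega
  have haB : a ∉ Bs := by
    simp only [hBs, Finset.mem_insert, Finset.mem_erase]
    push_neg
    exact ⟨har', fun h => absurd rfl h⟩
  have hrB : r ∈ Bs := Finset.mem_insert_self _ _
  -- an element of A₂ \ A₁
  obtain ⟨z, hzA₂, hzA₁⟩ : ∃ z ∈ A₂.1, z ∉ A₁.1 := by
    by_contra h
    push_neg at h
    exact hA12 ((Finset.eq_of_subset_of_card_le h (by rw [A₁.2, A₂.2])).symm)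
  have hzr : z ≠ r := fun h => hrL (h ▸ hA₂ hzA₂)
  have hzB : z ∉ Bs := by
    simp only [hBs, Finset.mem_insert, Finset.mem_erase]
    push_neg
    exact ⟨hzr, fun _ => hzA₁⟩
  -- B is not in the closed neighbourhood of A₂
  have hBadj : ¬ (tokenGraph G k).Adj A₂ ⟨Bs, hBcard⟩ := by
    rintro ⟨x, y, hxy, hsd⟩
    have hsub : ∀ u, u ∈ symmDiff A₂.1 Bs → u ∈ ({x, y} : Finset V) := by
      intro u hu; rw [← hsd]; exact hu
    have hrmem : r ∈ symmDiff A₂.1 Bs := Finset.mem_symmDiff.mpr (Or.inr ⟨hrB, hrA₂⟩)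
    have hzmem : z ∈ symmDiff A₂.1 Bs := Finset.mem_symmDiff.mpr (Or.inl ⟨hzA₂, hzB⟩)
    by_cases hcap : (A₁.1 ∩ A₂.1).Nonempty
    · have haA₂ := hkey hcap
      have hamem : a ∈ symmDiff A₂.1 Bs := Finset.mem_symmDiff.mpr (Or.inl ⟨haA₂, haB⟩)
      have haz : a ≠ z := fun h => hzA₁ (h ▸ haA₁)
      have h3 : ({a, z, r} : Finset V) ⊆ {x, y} := by
        intro u hu
        simp only [Finset.mem_insert, Finset.mem_singleton] at hu
        rcases hu with rfl | rfl | rfl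
        · exact hsub _ hamem
        · exact hsub _ hzmem
        · exact hsub _ hrmem
      have hc3 : ({a, z, r} : Finset V).card = 3 := by
        rw [Finset.card_insert_of_notMem (by simp [haz, har']),
            Finset.card_insert_of_notMem (by simp [hzr]), Finset.card_singleton]
      have := Finset.card_le_card h3
      have hc2 : ({x, y} : Finset V).card ≤ 2 := Finset.card_insert_le _ _ |>.trans (by simp)
      omega
    · obtain ⟨z', hz'A₂, hz'z⟩ : ∃ z' ∈ A₂.1, z' ≠ z := by
        obtain ⟨z', hz'⟩ := Finset.exists_mem_ne (by rw [A₂.2]; omega) z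
        exact ⟨z', hz'.1, hz'.2⟩
      have hz'A₁ : z' ∉ A₁.1 := fun h =>
        hcap ⟨z', Finset.mem_inter.mpr ⟨h, hz'A₂⟩⟩
      have hz'r : z' ≠ r := fun h => hrL (h ▸ hA₂ hz'A₂)
      have hz'B : z' ∉ Bs := by
        simp only [hBs, Finset.mem_insert, Finset.mem_erase]
        push_neg
        exact ⟨hz'r, fun _ => hz'A₁⟩
      have hz'mem : z' ∈ symmDiff A₂.1 Bs := Finset.mem_symmDiff.mpr (Or.inl ⟨hz'A₂, hz'B⟩)
      have h3 : ({z', z, r} : Finset V) ⊆ {x, y} := by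
        intro u hu
        simp only [Finset.mem_insert, Finset.mem_singleton] at hu
        rcases hu with rfl | rfl | rfl
        · exact hsub _ hz'mem
        · exact hsub _ hzmem
        · exact hsub _ hrmem
      have hc3 : ({z', z, r} : Finset V).card = 3 := by
        rw [Finset.card_insert_of_notMem (by simp [hz'z, hz'r]),
            Finset.card_insert_of_notMem (by simp [hzr]), Finset.card_singleton]
      have := Finset.card_le_card h3
      have hc2 : ({x, y} : Finset V).card ≤ 2 := Finset.card_insert_le _ _ |>.trans (by simp)
      omega
  have hBne : (⟨Bs, hBcard⟩ : {s : Finset V // s.card = k}) ≠ A₂ := by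
    intro h
    exact hrA₂ (by rw [← Subtype.ext_iff.mp h] at *; exact hrB)
  refine ⟨?_, ⟨Bs, hBcard⟩, ?_, ?_⟩
  · intro h
    rcases Set.mem_insert_iff.mp h with h | h
    · exact hne h
    · exact key A₂ A₁ hA₂ hA₁ h
  · intro h
    rcases Set.mem_insert_iff.mp h with h | h
    · exact hBne h
    · exact hBadj h
  · refine ⟨a, r, har, ?_⟩
    ext u
    simp only [Finset.mem_symmDiff, hBs, Finset.mem_insert, Finset.mem_erase,
      Finset.mem_singleton]
    constructor
    · rintro (⟨h1, h2⟩ | ⟨h1 | ⟨_, h1⟩, h3⟩)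
      · push_neg at h2
        by_cases hua : u = a
        · exact Or.inl hua
        · exact absurd h1 (h2.2 hua)
      · exact Or.inr h1
      · exact absurd h1 h3
    · rintro (rfl | rfl)
      · refine Or.inl ⟨haA₁, ?_⟩
        push_neg
        exact ⟨har', fun h => absurd rfl h⟩
      · exact Or.inr ⟨Or.inl rfl, hrA₁⟩
end

section
/- If G is a connected graph on at least 3 vertices and T_2(G) is well-covered, then the girth of G is at most 4 (i.e., G contains a cycle of length 3 or 4). -/
section Aux

lemma exists_max_ext {W : Type*} [Finite W] (H : SimpleGraph W) (S : Set W) (hS : IndepSet H S) :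
    ∃ T, S ⊆ T ∧ Maximal (IndepSet H) T := by
  obtain ⟨T, hT, hmax⟩ := Set.Finite.exists_maximalFor id {t | IndepSet H t ∧ S ⊆ t}
    (Set.toFinite _) ⟨S, hS, subset_rfl⟩
  exact ⟨T, hT.2, hT.1, fun b hb hle => hmax (j := b) ⟨hb, hT.2.trans hle⟩ hle⟩

/-- Key lemma: if `S₁, S₂` are independent sets with `N[S₁] ⊆ N[S₂]` and `|S₂| < |S₁|`,
then `H` is not well-covered. -/
lemma not_wc {W : Type*} [Finite W] (H : SimpleGraph W) (S₁ S₂ : Set W)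
    (h₁ : IndepSet H S₁) (h₂ : IndepSet H S₂)
    (hsub : ∀ x, (x ∈ S₁ ∨ ∃ s ∈ S₁, H.Adj x s) → (x ∈ S₂ ∨ ∃ s ∈ S₂, H.Adj x s))
    (hlt : S₂.ncard < S₁.ncard) : ¬ WellCovered H := by
  intro hwc
  classical
  set A : Set W := {x | ¬ (x ∈ S₂ ∨ ∃ s ∈ S₂, H.Adj x s)} with hA
  obtain ⟨M, hM, hmax⟩ := Set.Finite.exists_maximalFor id {t | IndepSet H t ∧ t ⊆ A}
    (Set.toFinite _) ⟨∅, by simp [IndepSet], by simp⟩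
  obtain ⟨hMind, hMA⟩ := hM
  have hdisj₂ : ∀ m ∈ M, m ∉ S₂ ∧ ∀ s ∈ S₂, ¬ H.Adj m s := by
    intro m hm
    have := hMA hm
    simp only [hA, Set.mem_setOf_eq] at this
    push_neg at this
    exact this
  have hMS₂ : IndepSet H (M ∪ S₂) := by
    intro x hx y hy hxy
    rcases hx with hx | hx <;> rcases hy with hy | hy
    · exact hMind hx hy hxy
    · exact (hdisj₂ x hx).2 y hy
    · intro hadj; exact (hdisj₂ y hy).2 x hx hadj.symm
    · exact h₂ hx hy hxy
  have hMS₂max : Maximal (IndepSet H) (M ∪ S₂) := by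
    refine ⟨hMS₂, fun t ht hle x hx => ?_⟩
    by_cases hxA : x ∈ A
    · have hMx : IndepSet H (M ∪ {x}) ∧ M ∪ {x} ⊆ A := by
        constructor
        · apply ht.mono
          intro y hy
          rcases hy with hy | hy
          · exact hle (Or.inl hy)
          · simp at hy; subst hy; exact hx
        · intro y hy; rcases hy with hy | hy
          · exact hMA hy
          · simp at hy; subst hy; exact hxA
      have := hmax (j := M ∪ {x}) hMx (by intro y hy; exact Or.inl hy)
      have hxM : x ∈ M := by
        have : M ∪ {x} ⊆ M := this
        exact this (Or.inr rfl)
      exact Or.inl hxM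
    · simp only [hA, Set.mem_setOf_eq, not_not] at hxA
      rcases hxA with hx₂ | ⟨s, hs, hadj⟩
      · exact Or.inr hx₂
      · have hst : s ∈ t := hle (Or.inr hs)
        by_cases hxs : x = s
        · exact Or.inr (hxs ▸ hs)
        · exact absurd hadj (ht hx hst hxs)
  have hdisj₁ : ∀ m ∈ M, m ∉ S₁ ∧ ∀ s ∈ S₁, ¬ H.Adj m s := by
    intro m hm
    have hmA := hMA hm
    simp only [hA, Set.mem_setOf_eq] at hmA
    constructor
    · intro hmS₁; exact hmA (hsub m (Or.inl hmS₁))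
    · intro s hs hadj; exact hmA (hsub m (Or.inr ⟨s, hs, hadj⟩))
  have hMS₁ : IndepSet H (M ∪ S₁) := by
    intro x hx y hy hxy
    rcases hx with hx | hx <;> rcases hy with hy | hy
    · exact hMind hx hy hxy
    · exact (hdisj₁ x hx).2 y hy
    · intro hadj; exact (hdisj₁ y hy).2 x hx hadj.symm
    · exact h₁ hx hy hxy
  obtain ⟨T, hTsub, hTmax⟩ := exists_max_ext H _ hMS₁
  have e₁ : T.ncard = (M ∪ S₂).ncard := hwc _ _ hTmax hMS₂max
  have hMdisjS₂ : Disjoint M S₂ := by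
    rw [Set.disjoint_left]; exact fun m hm => (hdisj₂ m hm).1
  have hMdisjS₁ : Disjoint M S₁ := by
    rw [Set.disjoint_left]; exact fun m hm => (hdisj₁ m hm).1
  have c₂ : (M ∪ S₂).ncard = M.ncard + S₂.ncard := Set.ncard_union_eq hMdisjS₂
  have c₁ : (M ∪ S₁).ncard = M.ncard + S₁.ncard := Set.ncard_union_eq hMdisjS₁
  have hle' : (M ∪ S₁).ncard ≤ T.ncard := Set.ncard_le_ncard hTsub (Set.toFinite _)
  omega

variable {V : Type*} [DecidableEq V] {G : SimpleGraph V}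

lemma pair_eq_pair {a b c d : V} (h : ({a, b} : Finset V) = {c, d}) :
    (a = c ∧ b = d) ∨ (a = d ∧ b = c) := by
  have ha : a = c ∨ a = d := by
    have : a ∈ ({c, d} : Finset V) := h ▸ Finset.mem_insert_self a {b}
    simpa using this
  have hb : b = c ∨ b = d := by
    have : b ∈ ({c, d} : Finset V) := by rw [← h]; simp
    simpa using this
  have hd : d = a ∨ d = b := by
    have : d ∈ ({a, b} : Finset V) := by rw [h]; simp
    simpa using this
  have hc : c = a ∨ c = b := by
    have : c ∈ ({a, b} : Finset V) := by rw [h]; simp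
    simpa using this
  rcases ha with rfl | rfl <;> rcases hb with rfl | rfl <;> simp_all

lemma adj_intro {A B : {s : Finset V // s.card = 2}} {x a b : V}
    (hxa : x ≠ a) (hxb : x ≠ b) (hab : G.Adj a b)
    (hA : A.1 = {x, a}) (hB : B.1 = {x, b}) : (tokenGraph G 2).Adj A B := by
  refine ⟨a, b, hab, ?_⟩
  rw [hA, hB]
  have hne : a ≠ b := hab.ne
  ext t
  simp only [Finset.mem_symmDiff, Finset.mem_insert, Finset.mem_singleton]
  constructor
  · rintro (⟨h1 | h1, h2⟩ | ⟨h1 | h1, h2⟩) <;> tauto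
  · rintro (rfl | rfl) <;> tauto

lemma nonadj_disjoint {A B : {s : Finset V // s.card = 2}}
    (h : ∀ t, t ∈ A.1 → t ∉ B.1) : ¬ (tokenGraph G 2).Adj A B := by
  rintro ⟨a, b, hab, hd⟩
  have hu : symmDiff A.1 B.1 = A.1 ∪ B.1 := by
    ext t
    simp only [Finset.mem_symmDiff, Finset.mem_union]
    constructor
    · tauto
    · rintro (ht | ht)
      · exact Or.inl ⟨ht, h t ht⟩
      · refine Or.inr ⟨ht, fun hA => h t hA ht⟩
  have hc4 : (A.1 ∪ B.1).card = 4 := by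
    rw [Finset.card_union_of_disjoint (Finset.disjoint_left.mpr h), A.2, B.2]
  have : (symmDiff A.1 B.1).card ≤ 2 := by
    rw [hd]
    exact (Finset.card_insert_le _ _).trans (by simp)
  rw [hu, hc4] at this
  omega

lemma nonadj_of_reps {A B : {s : Finset V // s.card = 2}} {α β γ δ : V}
    (hA : A.1 = {α, β}) (hB : B.1 = {γ, δ})
    (h1 : α ≠ γ) (h2 : α ≠ δ) (h3 : β ≠ γ) (h4 : β ≠ δ) : ¬ (tokenGraph G 2).Adj A B := by
  apply nonadj_disjoint
  intro t ht htB
  rw [hA] at ht; rw [hB] at htB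
  simp only [Finset.mem_insert, Finset.mem_singleton] at ht htB
  rcases ht with rfl | rfl <;> rcases htB with rfl | rfl <;> simp_all

lemma shared_aux {A B : {s : Finset V // s.card = 2}} {a b : V} (hab : a ≠ b)
    (hmem : ∀ t : V, ((t ∈ A.1 ∧ t ∉ B.1) ∨ (t ∈ B.1 ∧ t ∉ A.1)) ↔ (t = a ∨ t = b))
    (haA : a ∈ A.1) (haB : a ∉ B.1) (hbB : b ∈ B.1) (hbA : b ∉ A.1) :
    ∃ x, x ≠ a ∧ x ≠ b ∧ A.1 = {x, a} ∧ B.1 = {x, b} := by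
  obtain ⟨c, d, hcd, hA⟩ := Finset.card_eq_two.mp A.2
  have haA' : a = c ∨ a = d := by rw [hA] at haA; simpa using haA
  obtain ⟨x, hxA, hxa, hAx⟩ : ∃ x, x ∈ A.1 ∧ x ≠ a ∧ A.1 = {x, a} := by
    rcases haA' with rfl | rfl
    · exact ⟨d, by rw [hA]; simp, fun h => hcd h.symm, by rw [hA, Finset.pair_comm]⟩
    · exact ⟨c, by rw [hA]; simp, hcd, by rw [hA]⟩
  have hxB : x ∈ B.1 := by
    by_contra hxB
    have := (hmem x).mp (Or.inl ⟨hxA, hxB⟩)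
    rcases this with rfl | rfl
    · exact hxa rfl
    · exact hbA hxA
  have hxb : x ≠ b := fun h => hbA (h ▸ hxA)
  refine ⟨x, hxa, hxb, hAx, ?_⟩
  have hsub : ({x, b} : Finset V) ⊆ B.1 := by
    intro t ht
    simp only [Finset.mem_insert, Finset.mem_singleton] at ht
    rcases ht with rfl | rfl
    · exact hxB
    · exact hbB
  exact (Finset.eq_of_subset_of_card_le hsub (by rw [B.2, Finset.card_pair hxb])).symm

lemma adj_elim {A B : {s : Finset V // s.card = 2}} (h : (tokenGraph G 2).Adj A B) :
    ∃ x a b, x ≠ a ∧ x ≠ b ∧ G.Adj a b ∧ A.1 = {x, a} ∧ B.1 = {x, b} := by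
  obtain ⟨a, b, hab, hd⟩ := h
  have hne : a ≠ b := hab.ne
  have hmem : ∀ t : V, ((t ∈ A.1 ∧ t ∉ B.1) ∨ (t ∈ B.1 ∧ t ∉ A.1)) ↔ (t = a ∨ t = b) := by
    intro t
    rw [← Finset.mem_symmDiff, hd]
    simp
  have haAB := (hmem a).mpr (Or.inl rfl)
  have hbAB := (hmem b).mpr (Or.inr rfl)
  have hsame : ∀ s : Finset V, s.card = 2 → a ∈ s → b ∈ s →
      ∀ t, t ∈ s → t = a ∨ t = b := by
    intro s hs ha hb t ht
    obtain ⟨c, d, hcd, rfl⟩ := Finset.card_eq_two.mp hs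
    simp only [Finset.mem_insert, Finset.mem_singleton] at ha hb ht
    rcases ha with rfl | rfl <;> rcases hb with rfl | rfl <;> tauto
  rcases haAB with ⟨haA, haB⟩ | ⟨haB, haA⟩ <;> rcases hbAB with ⟨hbA, hbB⟩ | ⟨hbB, hbA⟩
  · exfalso
    obtain ⟨e, f, hef, hB⟩ := Finset.card_eq_two.mp B.2
    have heB : e ∈ B.1 := by rw [hB]; simp
    by_cases heA : e ∈ A.1
    · rcases hsame A.1 A.2 haA hbA e heA with rfl | rfl
      · exact haB heB
      · exact hbB heB
    · rcases (hmem e).mp (Or.inr ⟨heB, heA⟩) with rfl | rfl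
      · exact heA haA
      · exact heA hbA
  · obtain ⟨x, h1, h2, h3, h4⟩ := shared_aux hne hmem haA haB hbB hbA
    exact ⟨x, a, b, h1, h2, hab, h3, h4⟩
  · have hmem2 : ∀ t : V, ((t ∈ A.1 ∧ t ∉ B.1) ∨ (t ∈ B.1 ∧ t ∉ A.1)) ↔ (t = b ∨ t = a) := by
      intro t; rw [hmem t]; tauto
    obtain ⟨x, h1, h2, h3, h4⟩ := shared_aux hne.symm hmem2 hbA hbB haB haA
    exact ⟨x, b, a, h1, h2, hab.symm, h3, h4⟩
  · exfalso
    obtain ⟨e, f, hef, hA⟩ := Finset.card_eq_two.mp A.2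
    have heA : e ∈ A.1 := by rw [hA]; simp
    by_cases heB : e ∈ B.1
    · rcases hsame B.1 B.2 haB hbB e heB with rfl | rfl
      · exact haA heA
      · exact hbA heA
    · rcases (hmem e).mp (Or.inl ⟨heA, heB⟩) with rfl | rfl
      · exact heB haB
      · exact heB hbB

lemma nonadj_shared {A B : {s : Finset V // s.card = 2}} {x c d : V}
    (hxc : x ≠ c) (hxd : x ≠ d) (hcd : c ≠ d) (h : ¬ G.Adj c d)
    (hA : A.1 = {x, c}) (hB : B.1 = {x, d}) : ¬ (tokenGraph G 2).Adj A B := by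
  intro hadj
  obtain ⟨x', a, b, hx'a, hx'b, hab, hA', hB'⟩ := adj_elim hadj
  rcases pair_eq_pair (hA.symm.trans hA') with ⟨h5, h6⟩ | ⟨h5, h6⟩ <;>
    rcases pair_eq_pair (hB.symm.trans hB') with ⟨h7, h8⟩ | ⟨h7, h8⟩ <;> subst_vars <;> simp_all

end Aux
lemma main_aux {V : Type*} [Fintype V] [DecidableEq V] (G : SimpleGraph V)
    (hT : ∀ a b c, G.Adj a b → G.Adj b c → G.Adj c a → False)
    (hQ : ∀ a b c d, G.Adj a b → G.Adj b c → G.Adj c d → G.Adj d a → a ≠ c → b ≠ d → False)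
    {v u w : V} (huw : u ≠ w) (hvu : G.Adj v u) (hvw : G.Adj v w) :
    ¬ WellCovered (tokenGraph G 2) := by
  classical
  have huv : u ≠ v := hvu.ne'
  have hwv : w ≠ v := hvw.ne'
  have hnuw : ¬ G.Adj u w := fun h => hT v u w hvu h hvw.symm
  have hC : ∀ t, G.Adj u t → G.Adj w t → t = v := by
    intro t h1 h2
    by_contra hne
    exact hQ u t w v h1 h2.symm hvw.symm hvu huw hne
  have hN : ∀ x a b, G.Adj x a → G.Adj x b → G.Adj a b → False :=
    fun x a b h1 h2 h3 => hT x a b h1 h3 h2.symm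
  set p : {s : Finset V // s.card = 2} := ⟨{u, w}, Finset.card_pair huw⟩ with hp
  set y : {s : Finset V // s.card = 2} := ⟨{u, v}, Finset.card_pair huv⟩ with hy
  set z : {s : Finset V // s.card = 2} := ⟨{w, v}, Finset.card_pair hwv⟩ with hz
  set X : Set {s : Finset V // s.card = 2} :=
    {q | (∃ a, G.Adj u a ∧ a ≠ v ∧ q.1 = {u, a}) ∨ (∃ a, G.Adj w a ∧ a ≠ v ∧ q.1 = {w, a}) ∨
      (∃ a, G.Adj v a ∧ a ≠ u ∧ a ≠ w ∧ q.1 = {v, a})} with hXdef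
  have hXnonadj : ∀ A ∈ X, ∀ B ∈ X, A ≠ B → ¬ (tokenGraph G 2).Adj A B := by
    rintro A (⟨a, hua, hav, hA⟩ | ⟨a, hwa, hav, hA⟩ | ⟨a, hva, hau, haw, hA⟩)
      B (⟨b, hub, hbv, hB⟩ | ⟨b, hwb, hbv, hB⟩ | ⟨b, hvb, hbu, hbw, hB⟩) hAB
    · -- uu
      by_cases hab : a = b
      · exact absurd (Subtype.ext (hA.trans (by rw [hab, ← hB]))) hAB
      · exact nonadj_shared hua.ne hub.ne hab (fun h => hN u a b hua hub h) hA hB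
    · -- uw
      refine nonadj_of_reps hA hB huw ?_ ?_ ?_
      · intro h; exact hnuw (by rw [h]; exact hwb.symm)
      · intro h; exact hnuw (by rw [← h]; exact hua)
      · intro h; exact hav (hC a hua (by rw [h]; exact hwb))
    · -- uv
      refine nonadj_of_reps hA hB huv (fun h => hbu h.symm) hav ?_
      intro h
      exact hT v u a hvu hua ((show G.Adj v a by rw [h]; exact hvb).symm)
    · -- wu
      refine nonadj_of_reps hA hB huw.symm ?_ ?_ ?_
      · intro h; rw [← h] at hub; exact hnuw hub
      · intro h; rw [h] at hwa; exact hnuw hwa.symm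
      · intro h; exact hav (hC a (by rw [h]; exact hub) hwa)
    · -- ww
      by_cases hab : a = b
      · exact absurd (Subtype.ext (hA.trans (by rw [hab, ← hB]))) hAB
      · exact nonadj_shared hwa.ne hwb.ne hab (fun h => hN w a b hwa hwb h) hA hB
    · -- wv
      refine nonadj_of_reps hA hB hwv (fun h => hbw h.symm) hav ?_
      intro h
      exact hT v w a hvw hwa ((show G.Adj v a by rw [h]; exact hvb).symm)
    · -- vu
      refine nonadj_of_reps hA hB huv.symm (fun h => hbv h.symm) hau ?_
      intro h
      exact hT v u a hvu (by rw [h]; exact hub) hva.symm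
    · -- vw
      refine nonadj_of_reps hA hB hwv.symm (fun h => hbv h.symm) haw ?_
      intro h
      exact hT v w a hvw (by rw [h]; exact hwb) hva.symm
    · -- vv
      by_cases hab : a = b
      · exact absurd (Subtype.ext (hA.trans (by rw [hab, ← hB]))) hAB
      · exact nonadj_shared hva.ne hvb.ne hab (fun h => hN v a b hva hvb h) hA hB
  have hsymm : Symmetric fun A B : {s : Finset V // s.card = 2} => ¬ (tokenGraph G 2).Adj A B :=
    fun A B h h' => h h'.symm
  have hXind : IndepSet (tokenGraph G 2) X := fun A hA B hB hne => hXnonadj A hA B hB hne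
  have hpX : ∀ B ∈ X, ¬ (tokenGraph G 2).Adj p B := by
    rintro B (⟨a, hua, hav, hB⟩ | ⟨a, hwa, hav, hB⟩ | ⟨a, hva, hau, haw, hB⟩)
    · refine nonadj_shared huw hua.ne ?_ ?_ rfl hB
      · intro h; exact hnuw (by rw [h]; exact hua)
      · intro h; exact hav (hC a hua h)
    · refine nonadj_shared huw.symm hwa.ne ?_ ?_ (Finset.pair_comm u w) hB
      · intro h; exact hnuw (by rw [h]; exact hwa.symm)
      · intro h; exact hav (hC a h hwa)
    · exact nonadj_of_reps rfl hB huv (fun h => hau h.symm) hwv (fun h => haw h.symm)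
  have hzX : ∀ B ∈ X, ¬ (tokenGraph G 2).Adj z B := by
    rintro B (⟨a, hua, hav, hB⟩ | ⟨a, hwa, hav, hB⟩ | ⟨a, hva, hau, haw, hB⟩)
    · refine nonadj_of_reps rfl hB huw.symm ?_ huv.symm (fun h => hav h.symm)
      intro h; exact hnuw (by rw [h]; exact hua)
    · refine nonadj_shared hwv hwa.ne (fun h => hav h.symm) ?_ rfl hB
      intro h; exact hT v a w h hwa.symm hvw.symm
    · refine nonadj_shared hwv.symm hva.ne (fun h => haw h.symm) ?_ (Finset.pair_comm w v) hB
      intro h; exact hT v w a hvw h hva.symm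
  have hyX : ∀ B ∈ X, ¬ (tokenGraph G 2).Adj y B := by
    rintro B (⟨a, hua, hav, hB⟩ | ⟨a, hwa, hav, hB⟩ | ⟨a, hva, hau, haw, hB⟩)
    · refine nonadj_shared huv hua.ne (fun h => hav h.symm) ?_ rfl hB
      intro h; exact hT v a u h hua.symm hvu.symm
    · refine nonadj_of_reps rfl hB huw ?_ hwv.symm (fun h => hav h.symm)
      intro h; exact hnuw (by rw [h]; exact hwa.symm)
    · refine nonadj_shared huv.symm hva.ne (fun h => hau h.symm) ?_ (Finset.pair_comm u v) hB
      intro h; exact hT v u a hvu h hva.symm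
  have hyz : ¬ (tokenGraph G 2).Adj y z :=
    nonadj_shared huv.symm hwv.symm huw hnuw (Finset.pair_comm u v) (Finset.pair_comm w v)
  haveI : Std.Symm fun A B : {s : Finset V // s.card = 2} => ¬ (tokenGraph G 2).Adj A B :=
    ⟨fun a b h => hsymm h⟩
  have hS₂ind : IndepSet (tokenGraph G 2) (insert p X) :=
    (Set.pairwise_insert_of_symmetric).mpr ⟨hXind, fun B hB _ => hpX B hB⟩
  have hS₁ind : IndepSet (tokenGraph G 2) (insert y (insert z X)) := by
    refine (Set.pairwise_insert_of_symmetric).mpr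
      ⟨(Set.pairwise_insert_of_symmetric).mpr ⟨hXind, fun B hB _ => hzX B hB⟩,
        fun B hB _ => ?_⟩
    rcases hB with rfl | hB
    · exact hyz
    · exact hyX B hB
  -- adjacency of y and z to p
  have hadj_yp : (tokenGraph G 2).Adj y p := adj_intro huv huw hvw rfl rfl
  have hadj_zp : (tokenGraph G 2).Adj z p :=
    adj_intro hwv huw.symm hvu rfl (Finset.pair_comm u w)
  -- the closed neighbourhood containment
  have hsub : ∀ q, (q ∈ insert y (insert z X) ∨ ∃ s ∈ insert y (insert z X),
      (tokenGraph G 2).Adj q s) →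
      (q ∈ insert p X ∨ ∃ s ∈ insert p X, (tokenGraph G 2).Adj q s) := by
    intro q hq
    rcases hq with hq | ⟨s, hs, hadj⟩
    · rcases hq with rfl | hq
      · exact Or.inr ⟨p, Set.mem_insert _ _, hadj_yp⟩
      · rcases hq with rfl | hq
        · exact Or.inr ⟨p, Set.mem_insert _ _, hadj_zp⟩
        · exact Or.inl (Set.mem_insert_of_mem p hq)
    · rcases hs with rfl | hs
      · -- s = y
        obtain ⟨x, a, b, hxa, hxb, hab, hqrep, hyrep⟩ := adj_elim hadj
        rcases pair_eq_pair (show ({u, v} : Finset V) = {x, b} from hyrep) with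
          ⟨h1, h2⟩ | ⟨h1, h2⟩
        · subst h1; subst h2
          -- q = {u, a}, G.Adj a v
          by_cases haw : a = w
          · exact Or.inl (Set.mem_insert_iff.mpr (Or.inl (Subtype.ext (by
              rw [hqrep, haw]))))
          · refine Or.inr ⟨⟨{v, a}, Finset.card_pair hab.ne'⟩, Set.mem_insert_of_mem _
              (Or.inr (Or.inr ⟨a, hab.symm, hxa.symm, haw, rfl⟩)), ?_⟩
            exact adj_intro hxa.symm hab.ne hvu.symm (hqrep.trans (Finset.pair_comm u a))
              (Finset.pair_comm v a)
        · subst h1; subst h2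
          -- q = {v, a}, G.Adj a u
          by_cases haw : a = w
          · refine Or.inr ⟨p, Set.mem_insert _ _, ?_⟩
            exact adj_intro hwv huw.symm hvu (by rw [hqrep, haw, Finset.pair_comm v w])
              (Finset.pair_comm u w)
          · refine Or.inr ⟨⟨{u, a}, Finset.card_pair hab.ne'⟩, Set.mem_insert_of_mem _
              (Or.inl ⟨a, hab.symm, hxa.symm, rfl⟩), ?_⟩
            exact adj_intro hxa.symm hab.ne hvu (hqrep.trans (Finset.pair_comm v a))
              (Finset.pair_comm u a)
      · rcases hs with rfl | hs
        · -- s = z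
          obtain ⟨x, a, b, hxa, hxb, hab, hqrep, hzrep⟩ := adj_elim hadj
          rcases pair_eq_pair (show ({w, v} : Finset V) = {x, b} from hzrep) with
            ⟨h1, h2⟩ | ⟨h1, h2⟩
          · subst h1; subst h2
            -- q = {w, a}, G.Adj a v
            by_cases hau : a = u
            · exact Or.inl (Set.mem_insert_iff.mpr (Or.inl (Subtype.ext (by
                rw [hqrep, hau, Finset.pair_comm w u]))))
            · refine Or.inr ⟨⟨{v, a}, Finset.card_pair hab.ne'⟩, Set.mem_insert_of_mem _
                (Or.inr (Or.inr ⟨a, hab.symm, hau, hxa.symm, rfl⟩)), ?_⟩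
              exact adj_intro hxa.symm hab.ne hvw.symm (hqrep.trans (Finset.pair_comm w a))
                (Finset.pair_comm v a)
          · subst h1; subst h2
            -- q = {v, a}, G.Adj a w
            by_cases hau : a = u
            · refine Or.inr ⟨p, Set.mem_insert _ _, ?_⟩
              exact adj_intro huv huw hvw (by rw [hqrep, hau, Finset.pair_comm v u]) rfl
            · refine Or.inr ⟨⟨{w, a}, Finset.card_pair hab.ne'⟩, Set.mem_insert_of_mem _
                (Or.inr (Or.inl ⟨a, hab.symm, hxa.symm, rfl⟩)), ?_⟩
              exact adj_intro hxa.symm hab.ne hvw (hqrep.trans (Finset.pair_comm v a))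
                (Finset.pair_comm w a)
        · exact Or.inr ⟨s, Set.mem_insert_of_mem _ hs, hadj⟩
  -- cardinalities
  have hyneqz : y ≠ z := by
    intro h
    rcases pair_eq_pair (show ({u, v} : Finset V) = {w, v} from congrArg Subtype.val h) with
      ⟨h1, _⟩ | ⟨h1, h2⟩
    · exact huw h1
    · exact hwv h2.symm
  have hynX : y ∉ X := by
    rintro (⟨a, hua, hav, hrep⟩ | ⟨a, hwa, hav, hrep⟩ | ⟨a, hva, hau, haw, hrep⟩)
    · rcases pair_eq_pair (show ({u, v} : Finset V) = {u, a} from hrep) with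
        ⟨_, h2⟩ | ⟨h1, h2⟩
      · exact hav h2.symm
      · exact huv h2.symm
    · rcases pair_eq_pair (show ({u, v} : Finset V) = {w, a} from hrep) with
        ⟨h1, _⟩ | ⟨_, h2⟩
      · exact huw h1
      · exact hwv h2.symm
    · rcases pair_eq_pair (show ({u, v} : Finset V) = {v, a} from hrep) with
        ⟨h1, _⟩ | ⟨h1, _⟩
      · exact huv h1
      · exact hau h1.symm
  have hznX : z ∉ X := by
    rintro (⟨a, hua, hav, hrep⟩ | ⟨a, hwa, hav, hrep⟩ | ⟨a, hva, hau, haw, hrep⟩)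
    · rcases pair_eq_pair (show ({w, v} : Finset V) = {u, a} from hrep) with
        ⟨h1, _⟩ | ⟨_, h2⟩
      · exact huw h1.symm
      · exact huv h2.symm
    · rcases pair_eq_pair (show ({w, v} : Finset V) = {w, a} from hrep) with
        ⟨_, h2⟩ | ⟨h1, h2⟩
      · exact hav h2.symm
      · exact hwv h2.symm
    · rcases pair_eq_pair (show ({w, v} : Finset V) = {v, a} from hrep) with
        ⟨h1, _⟩ | ⟨h1, _⟩
      · exact hwv h1
      · exact haw h1.symm
  have hpnX : p ∉ X := by
    rintro (⟨a, hua, hav, hrep⟩ | ⟨a, hwa, hav, hrep⟩ | ⟨a, hva, hau, haw, hrep⟩)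
    · rcases pair_eq_pair (show ({u, w} : Finset V) = {u, a} from hrep) with
        ⟨_, h2⟩ | ⟨_, h2⟩
      · exact hnuw (by rw [h2]; exact hua)
      · exact huw h2.symm
    · rcases pair_eq_pair (show ({u, w} : Finset V) = {w, a} from hrep) with
        ⟨h1, _⟩ | ⟨h1, _⟩
      · exact huw h1
      · exact hnuw ((show G.Adj w u by rw [h1]; exact hwa)).symm
    · rcases pair_eq_pair (show ({u, w} : Finset V) = {v, a} from hrep) with
        ⟨h1, _⟩ | ⟨_, h2⟩
      · exact huv h1
      · exact hwv h2
  have hlt : (insert p X).ncard < (insert y (insert z X)).ncard := by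
    rw [Set.ncard_insert_of_notMem hpnX, Set.ncard_insert_of_notMem
      (by simp only [Set.mem_insert_iff]; push_neg; exact ⟨hyneqz, hynX⟩),
      Set.ncard_insert_of_notMem hznX]
    omega
  exact fun hwc => not_wc (tokenGraph G 2) _ _ hS₁ind hS₂ind hsub hlt hwc

lemma exists_center {V : Type*} [Fintype V] [DecidableEq V] (G : SimpleGraph V)
    (hG : G.Connected) (hn : 3 ≤ Fintype.card V) :
    ∃ v u w : V, u ≠ w ∧ G.Adj v u ∧ G.Adj v w := by
  by_contra hcon
  push_neg at hcon
  have huniq : ∀ c a b : V, G.Adj c a → G.Adj c b → a = b := by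
    intro c a b h1 h2
    by_contra hne
    exact hcon c a b hne h1 h2
  -- there is an edge
  obtain ⟨a, b, hab⟩ : ∃ a b : V, a ≠ b := Fintype.exists_pair_of_one_lt_card (by omega)
  obtain ⟨q⟩ := hG.preconnected a b
  obtain ⟨u, v, hadj⟩ : ∃ u v : V, G.Adj u v := by
    cases q with
    | nil => exact absurd rfl hab
    | cons h _ => exact ⟨_, _, h⟩
  have claim : ∀ (s x : V) (q : G.Walk s x), (s = u ∨ s = v) → (x = u ∨ x = v) := by
    intro s x q
    induction q with
    | nil => exact id
    | cons h p ih =>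
      rename_i s' b' x'
      intro hs
      apply ih
      rcases hs with rfl | rfl
      · exact Or.inr (huniq s' b' v h hadj)
      · exact Or.inl (huniq s' b' u h hadj.symm)
  have hnsub : ¬ (Finset.univ : Finset V) ⊆ {u, v} := by
    intro hsub
    have h1 := Finset.card_le_card hsub
    have h2 : ({u, v} : Finset V).card ≤ 2 :=
      (Finset.card_insert_le _ _).trans (by simp)
    rw [Finset.card_univ] at h1
    omega
  obtain ⟨x, _, hx⟩ := Finset.not_subset.mp hnsub
  obtain ⟨q'⟩ := hG.preconnected u x
  rcases claim u x q' (Or.inl rfl) with rfl | rfl <;> simp at hx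

theorem stmt16 {V : Type*} [Fintype V] [DecidableEq V] (G : SimpleGraph V)
    (hG : G.Connected) (hn : 3 ≤ Fintype.card V)
    (hwc : WellCovered (tokenGraph G 2)) :
    G.egirth ≤ 4 := by
  by_contra hlt4
  have h5 : (4 : ℕ∞) < G.egirth := not_le.mp hlt4
  have hcyc : ∀ (a : V) (wk : G.Walk a a), wk.IsCycle → (4 : ℕ∞) < wk.length :=
    fun a wk hw => h5.trans_le (SimpleGraph.le_egirth.mp le_rfl a wk hw)
  have hT : ∀ a b c, G.Adj a b → G.Adj b c → G.Adj c a → False := by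
    intro a b c hab hbc hca
    have h1 : a ≠ b := hab.ne
    have h2 : b ≠ c := hbc.ne
    have h3 : c ≠ a := hca.ne
    have hcy : (SimpleGraph.Walk.cons hab (SimpleGraph.Walk.cons hbc
        (SimpleGraph.Walk.cons hca SimpleGraph.Walk.nil))).IsCycle := by
      simp [SimpleGraph.Walk.isCycle_def, SimpleGraph.Walk.isTrail_def, List.Nodup,
        h1, h2, h3, Sym2.eq, Sym2.rel_iff]
      aesop
    have := hcyc a _ hcy
    norm_num [SimpleGraph.Walk.length_cons, SimpleGraph.Walk.length_nil] at this
  have hQ : ∀ a b c d, G.Adj a b → G.Adj b c → G.Adj c d → G.Adj d a →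
      a ≠ c → b ≠ d → False := by
    intro a b c d hab hbc hcd hda hac hbd
    have h1 : a ≠ b := hab.ne
    have h2 : b ≠ c := hbc.ne
    have h3 : c ≠ d := hcd.ne
    have h4 : d ≠ a := hda.ne
    have hcy : (SimpleGraph.Walk.cons hab (SimpleGraph.Walk.cons hbc
        (SimpleGraph.Walk.cons hcd (SimpleGraph.Walk.cons hda
          SimpleGraph.Walk.nil)))).IsCycle := by
      simp [SimpleGraph.Walk.isCycle_def, SimpleGraph.Walk.isTrail_def, List.Nodup,
        h1, h2, h3, h4, hac, hbd, Sym2.eq, Sym2.rel_iff]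
      aesop
    have := hcyc a _ hcy
    norm_num [SimpleGraph.Walk.length_cons, SimpleGraph.Walk.length_nil] at this
  obtain ⟨v, u, w, huw, hvu, hvw⟩ := exists_center G hG hn
  exact main_aux G hT hQ huw hvu hvw hwc
end

section
/- Let G be a graph on n vertices that is the disjoint union of complete graphs K_m (on vertex set X) and K_n' (on vertex set Y) with n' = m > 1, plus exactly one additional edge {x_1, y_1} with x_1 ∈ X, y_1 ∈ Y. Then T_2(G) is not well-covered. -/
section Tok
variable {V : Type*} [DecidableEq V] {G : SimpleGraph V} {A B : {s : Finset V // s.card = 2}}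

lemma finpair_eq_iff {a b c d : V} : ({a,b} : Finset V) = {c,d} ↔ a = c ∧ b = d ∨ a = d ∧ b = c := by
  constructor
  · intro h
    have := congrArg (fun s : Finset V => (s : Set V)) h
    simpa [Set.pair_eq_pair_iff] using this
  · rintro (⟨rfl, rfl⟩|⟨rfl, rfl⟩)
    · rfl
    · exact Finset.pair_comm a b

lemma symmDiff_pair {a b c : V} (hca : c ≠ a) (hcb : c ≠ b) (hab : a ≠ b) :
    symmDiff ({c,a} : Finset V) {c,b} = {a,b} := by
  ext x
  simp only [Finset.mem_symmDiff, Finset.mem_insert, Finset.mem_singleton]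
  constructor
  · rintro (⟨h1|h1, h2⟩|⟨h1|h1, h2⟩) <;> subst h1 <;> tauto
  · rintro (rfl|rfl)
    · exact Or.inl ⟨Or.inr rfl, by rintro (h|h) <;> simp_all⟩
    · exact Or.inr ⟨Or.inr rfl, by rintro (h|h) <;> simp_all⟩

lemma token_adj_intro (c a b : V) (hab : G.Adj a b) (hA : A.1 = {c,a}) (hB : B.1 = {c,b}) :
    (tokenGraph G 2).Adj A B := by
  have hca : c ≠ a := by
    rintro rfl
    have := A.2
    rw [hA] at this
    simp at this
  have hcb : c ≠ b := by
    rintro rfl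
    have := B.2
    rw [hB] at this
    simp at this
  exact ⟨a, b, hab, by rw [hA, hB, symmDiff_pair hca hcb hab.ne]⟩

lemma token_adj_aux {a b : V} (hab : G.Adj a b) (hs : symmDiff A.1 B.1 = {a, b})
    (haA : a ∈ A.1) (haB : a ∉ B.1) (hbB : b ∈ B.1) (hbA : b ∉ A.1) :
    ∃ c x y, G.Adj x y ∧ c ≠ x ∧ c ≠ y ∧ A.1 = {c, x} ∧ B.1 = {c, y} := by
  obtain ⟨u, v, huv, hA⟩ := Finset.card_eq_two.1 A.2
  have ha' : a = u ∨ a = v := by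
    have := haA; rw [hA] at this; simpa using this
  -- c is the other element of A
  obtain ⟨c, hcA, hca⟩ : ∃ c, A.1 = {a, c} ∧ c ≠ a := by
    rcases ha' with rfl | rfl
    · exact ⟨v, hA, fun h => huv h.symm⟩
    · exact ⟨u, by rw [hA, Finset.pair_comm], huv⟩
  have hcB : c ∈ B.1 := by
    by_contra hcB
    have hcs : c ∈ symmDiff A.1 B.1 := by
      simp [Finset.mem_symmDiff, hcA, hcB]
    rw [hs] at hcs
    simp at hcs
    rcases hcs with rfl | rfl
    · exact hca rfl
    · exact hbA (by simp [hcA])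
  have hcb : c ≠ b := by rintro rfl; exact hbA (by simp [hcA])
  have hB : B.1 = {c, b} := by
    apply (Finset.eq_of_subset_of_card_le _ _).symm
    · intro x hx
      simp at hx
      rcases hx with rfl | rfl
      · exact hcB
      · exact hbB
    · rw [B.2, Finset.card_pair hcb]
  exact ⟨c, a, b, hab, hca, hcb, by rw [hcA, Finset.pair_comm], hB⟩

lemma token_adj_elim (h : (tokenGraph G 2).Adj A B) :
    ∃ c a b, G.Adj a b ∧ c ≠ a ∧ c ≠ b ∧ A.1 = {c, a} ∧ B.1 = {c, b} := by
  obtain ⟨a, b, hab, hs⟩ := h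
  have hAB : A ≠ B := by
    rintro rfl
    rw [symmDiff_self] at hs
    have : a ∈ (⊥ : Finset V) := by rw [hs]; simp
    simp at this
  have hamem : a ∈ symmDiff A.1 B.1 := by rw [hs]; simp
  have hbmem : b ∈ symmDiff A.1 B.1 := by rw [hs]; simp
  rw [Finset.mem_symmDiff] at hamem hbmem
  have hsub : ∀ x, x ∈ symmDiff A.1 B.1 → x = a ∨ x = b := by
    intro x hx; rw [hs] at hx; simpa using hx
  rcases hamem with ⟨haA, haB⟩ | ⟨haB, haA⟩
  · rcases hbmem with ⟨hbA, hbB⟩ | ⟨hbB, hbA⟩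
    · -- both in A \ B : contradiction, B ⊆ A
      exfalso
      have : B.1 ⊆ A.1 := by
        intro x hxB
        by_contra hxA
        rcases hsub x (by rw [Finset.mem_symmDiff]; right; exact ⟨hxB, hxA⟩) with rfl | rfl
        · exact haB hxB
        · exact hbB hxB
      have : B.1 = A.1 := Finset.eq_of_subset_of_card_le this (by rw [A.2, B.2])
      exact hAB (Subtype.ext this.symm)
    · exact token_adj_aux hab hs haA haB hbB hbA
  · rcases hbmem with ⟨hbA, hbB⟩ | ⟨hbB, hbA⟩
    · obtain ⟨c, x, y, h1, h2, h3, h4, h5⟩ := token_adj_aux hab.symm (by rwa [Finset.pair_comm]) hbA hbB haB haA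
      exact ⟨c, x, y, h1, h2, h3, h4, h5⟩
    · exfalso
      have : A.1 ⊆ B.1 := by
        intro x hxA
        by_contra hxB
        rcases hsub x (by rw [Finset.mem_symmDiff]; left; exact ⟨hxA, hxB⟩) with rfl | rfl
        · exact haA hxA
        · exact hbA hxA
      have : A.1 = B.1 := Finset.eq_of_subset_of_card_le this (by rw [A.2, B.2])
      exact hAB (Subtype.ext this)

end Tok

/-- The disjoint union of two copies of `K_m` (on `X = Fin m ⊕ ∅` and `Y`),
together with the single extra edge `{x₁, y₁}`. -/
def twoCliquesPlusEdge (m : ℕ) (x₁ y₁ : Fin m) : SimpleGraph (Fin m ⊕ Fin m) where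
  Adj u v :=
    (∃ a b, u = Sum.inl a ∧ v = Sum.inl b ∧ a ≠ b) ∨
    (∃ a b, u = Sum.inr a ∧ v = Sum.inr b ∧ a ≠ b) ∨
    (u = Sum.inl x₁ ∧ v = Sum.inr y₁) ∨ (u = Sum.inr y₁ ∧ v = Sum.inl x₁)
  symm := by
    constructor
    rintro u v (⟨a, b, rfl, rfl, h⟩ | ⟨a, b, rfl, rfl, h⟩ | ⟨rfl, rfl⟩ | ⟨rfl, rfl⟩)
    · exact Or.inl ⟨b, a, rfl, rfl, h.symm⟩
    · exact Or.inr (Or.inl ⟨b, a, rfl, rfl, h.symm⟩)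
    · exact Or.inr (Or.inr (Or.inr ⟨rfl, rfl⟩))
    · exact Or.inr (Or.inr (Or.inl ⟨rfl, rfl⟩))
  loopless := by
    constructor
    rintro u (⟨a, b, rfl, h, hne⟩ | ⟨a, b, rfl, h, hne⟩ | ⟨rfl, h⟩ | ⟨rfl, h⟩) <;> simp_all


section Main
variable {m : ℕ}

def z0 (hm : 1 < m) : Fin m := ⟨0, by omega⟩
def z1 (hm : 1 < m) : Fin m := ⟨1, hm⟩

def vx (hm : 1 < m) (x₁ : Fin m) (i : Fin m) : Fin m ⊕ Fin m := Sum.inl (Equiv.swap (z0 hm) x₁ i)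
def vy (hm : 1 < m) (y₁ : Fin m) (i : Fin m) : Fin m ⊕ Fin m := Sum.inr (Equiv.swap (z0 hm) y₁ i)

variable (hm : 1 < m) (x₁ y₁ : Fin m)

lemma vx_inj {i j : Fin m} : vx hm x₁ i = vx hm x₁ j ↔ i = j := by
  constructor
  · intro h
    exact (Equiv.swap (z0 hm) x₁).injective (Sum.inl.inj h)
  · rintro rfl; rfl

lemma vy_inj {i j : Fin m} : vy hm y₁ i = vy hm y₁ j ↔ i = j := by
  constructor
  · intro h
    exact (Equiv.swap (z0 hm) y₁).injective (Sum.inr.inj h)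
  · rintro rfl; rfl

lemma vx_ne_vy {i j : Fin m} : vx hm x₁ i ≠ vy hm y₁ j := by
  simp [vx, vy]

lemma vy_ne_vx {i j : Fin m} : vy hm y₁ i ≠ vx hm x₁ j := by
  simp [vx, vy]

lemma vx_eq_vy_iff {i j : Fin m} : vx hm x₁ i = vy hm y₁ j ↔ False := by
  simp [vx, vy]

lemma vy_eq_vx_iff {i j : Fin m} : vy hm y₁ i = vx hm x₁ j ↔ False := by
  simp [vx, vy]

lemma z0_val : ((z0 hm : Fin m) : ℕ) = 0 := rfl
lemma z1_val : ((z1 hm : Fin m) : ℕ) = 1 := rfl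

lemma vx_or_vy (u : Fin m ⊕ Fin m) :
    (∃ i, u = vx hm x₁ i) ∨ (∃ i, u = vy hm y₁ i) := by
  rcases u with w | w
  · exact Or.inl ⟨Equiv.swap (z0 hm) x₁ w, by simp [vx]⟩
  · exact Or.inr ⟨Equiv.swap (z0 hm) y₁ w, by simp [vy]⟩

lemma swap_eq_x₁ {i : Fin m} : Equiv.swap (z0 hm) x₁ i = x₁ ↔ i = z0 hm := by
  constructor
  · intro h
    apply (Equiv.swap (z0 hm) x₁).injective
    rw [h, Equiv.swap_apply_left]
  · rintro rfl; exact Equiv.swap_apply_left _ _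

lemma adj_xx {i j : Fin m} :
    (twoCliquesPlusEdge m x₁ y₁).Adj (vx hm x₁ i) (vx hm x₁ j) ↔ i ≠ j := by
  constructor
  · rintro (⟨a, b, h1, h2, h3⟩ | ⟨a, b, h1, h2, h3⟩ | ⟨h1, h2⟩ | ⟨h1, h2⟩)
    · simp only [vx, Sum.inl.injEq] at h1 h2
      rintro rfl; exact h3 (h1 ▸ h2 ▸ rfl)
    · simp [vx] at h1
    · simp [vx] at h2
    · simp [vx] at h1
  · intro h
    exact Or.inl ⟨_, _, rfl, rfl, fun he => h ((Equiv.swap (z0 hm) x₁).injective he)⟩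

lemma adj_yy {i j : Fin m} :
    (twoCliquesPlusEdge m x₁ y₁).Adj (vy hm y₁ i) (vy hm y₁ j) ↔ i ≠ j := by
  constructor
  · rintro (⟨a, b, h1, h2, h3⟩ | ⟨a, b, h1, h2, h3⟩ | ⟨h1, h2⟩ | ⟨h1, h2⟩)
    · simp [vy] at h1
    · simp only [vy, Sum.inr.injEq] at h1 h2
      rintro rfl; exact h3 (h1 ▸ h2 ▸ rfl)
    · simp [vy] at h1
    · simp [vy] at h2
  · intro h
    exact Or.inr (Or.inl ⟨_, _, rfl, rfl, fun he => h ((Equiv.swap (z0 hm) y₁).injective he)⟩)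

lemma adj_xy {i j : Fin m} :
    (twoCliquesPlusEdge m x₁ y₁).Adj (vx hm x₁ i) (vy hm y₁ j) ↔ i = z0 hm ∧ j = z0 hm := by
  constructor
  · rintro (⟨a, b, h1, h2, h3⟩ | ⟨a, b, h1, h2, h3⟩ | ⟨h1, h2⟩ | ⟨h1, h2⟩) <;>
      simp [vx, vy] at h1 h2 ⊢
    exact ⟨(swap_eq_x₁ hm x₁).1 h1, (swap_eq_x₁ hm y₁).1 h2⟩
  · rintro ⟨rfl, rfl⟩
    refine Or.inr (Or.inr (Or.inl ⟨?_, ?_⟩)) <;> simp [vx, vy]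

lemma adj_yx {i j : Fin m} :
    (twoCliquesPlusEdge m x₁ y₁).Adj (vy hm y₁ j) (vx hm x₁ i) ↔ i = z0 hm ∧ j = z0 hm := by
  rw [SimpleGraph.adj_comm]; exact adj_xy hm x₁ y₁

abbrev Wm (m : ℕ) := {s : Finset (Fin m ⊕ Fin m) // s.card = 2}

def MX (i j : Fin m) : Prop := (j : ℕ) = (i : ℕ) + 1 ∧ (i : ℕ) % 2 = 0
def TY (i j : Fin m) : Prop := (j : ℕ) = (i : ℕ) + 1 ∧ 1 ≤ (i : ℕ) ∧ (i : ℕ) % 2 = m % 2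
def FT (i j : Fin m) : Prop :=
  ((i : ℕ) = 0 ∧ (j : ℕ) = 1) ∨ (2 ≤ (i : ℕ) ∧ (j : ℕ) = (i : ℕ))

def setS (hm : 1 < m) (x₁ y₁ : Fin m) : Set (Wm m) :=
  {A | (∃ i, A.1 = {vx hm x₁ i, vy hm y₁ i}) ∨
    (∃ i j, MX i j ∧ A.1 = {vx hm x₁ i, vx hm x₁ j}) ∨
    (∃ i j, MX i j ∧ A.1 = {vy hm y₁ i, vy hm y₁ j})}

def setT (hm : 1 < m) (x₁ y₁ : Fin m) : Set (Wm m) :=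
  {A | (∃ i j, FT i j ∧ A.1 = {vx hm x₁ i, vy hm y₁ j}) ∨
    (∃ i j, MX i j ∧ A.1 = {vx hm x₁ i, vx hm x₁ j}) ∨
    (∃ i j, TY i j ∧ A.1 = {vy hm y₁ i, vy hm y₁ j})}

lemma indepS : IndepSet (tokenGraph (twoCliquesPlusEdge m x₁ y₁) 2) (setS hm x₁ y₁) := by
  intro A hA B hB hne hadj
  have hne' : A.1 ≠ B.1 := fun h => hne (Subtype.ext h)
  obtain ⟨c, a, b, hab, hca, hcb, hA1, hB1⟩ := token_adj_elim hadj
  rcases hA with ⟨i, hAe⟩ | ⟨i, j, hij, hAe⟩ | ⟨i, j, hij, hAe⟩ <;>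
    rcases hB with ⟨k, hBe⟩ | ⟨k, l, hkl, hBe⟩ | ⟨k, l, hkl, hBe⟩ <;>
    rw [hAe] at hA1 hne' <;> rw [hBe] at hB1 hne' <;>
    rw [finpair_eq_iff] at hA1 hB1 <;>
    rcases hA1 with ⟨h1, h2⟩ | ⟨h1, h2⟩ <;> rcases hB1 with ⟨h3, h4⟩ | ⟨h3, h4⟩ <;>
    (try subst h1) <;> (try subst h2) <;> (try subst h3) <;> (try subst h4) <;>
    (try simp only [vx_inj, vy_inj, vx_eq_vy_iff, vy_eq_vx_iff, ne_eq, finpair_eq_iff,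
      adj_xx, adj_yy, adj_xy, adj_yx, MX, TY, FT, Fin.ext_iff, z0_val, z1_val] at *) <;>
    omega

lemma indepT : IndepSet (tokenGraph (twoCliquesPlusEdge m x₁ y₁) 2) (setT hm x₁ y₁) := by
  intro A hA B hB hne hadj
  have hne' : A.1 ≠ B.1 := fun h => hne (Subtype.ext h)
  obtain ⟨c, a, b, hab, hca, hcb, hA1, hB1⟩ := token_adj_elim hadj
  rcases hA with ⟨i, i', hii, hAe⟩ | ⟨i, j, hij, hAe⟩ | ⟨i, j, hij, hAe⟩ <;>
    rcases hB with ⟨k, k', hkk, hBe⟩ | ⟨k, l, hkl, hBe⟩ | ⟨k, l, hkl, hBe⟩ <;>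
    rw [hAe] at hA1 hne' <;> rw [hBe] at hB1 hne' <;>
    rw [finpair_eq_iff] at hA1 hB1 <;>
    rcases hA1 with ⟨h1, h2⟩ | ⟨h1, h2⟩ <;> rcases hB1 with ⟨h3, h4⟩ | ⟨h3, h4⟩ <;>
    (try subst h1) <;> (try subst h2) <;> (try subst h3) <;> (try subst h4) <;>
    (try simp only [vx_inj, vy_inj, vx_eq_vy_iff, vy_eq_vx_iff, ne_eq, finpair_eq_iff,
      adj_xx, adj_yy, adj_xy, adj_yx, MX, TY, FT, Fin.ext_iff, z0_val, z1_val] at *) <;>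
    omega

lemma pairMX {i j : Fin m} (hij : i ≠ j) :
    (MX i j ∨ MX j i) ∨
      ∃ k p o : Fin m, (MX k p ∨ MX p k) ∧ p ≠ o ∧
        ((k = i ∧ o = j) ∨ (k = j ∧ o = i)) := by
  have hij' : (i : ℕ) ≠ (j : ℕ) := fun h => hij (Fin.ext h)
  by_cases h2 : (i : ℕ) % 2 = 0
  · by_cases h3 : (i : ℕ) + 1 < m
    · set p : Fin m := ⟨(i : ℕ) + 1, h3⟩ with hp
      by_cases h4 : p = j
      · exact Or.inl (Or.inl ⟨by rw [← h4], h2⟩)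
      · exact Or.inr ⟨i, p, j, Or.inl ⟨rfl, h2⟩, h4, Or.inl ⟨rfl, rfl⟩⟩
    · by_cases h5 : (j : ℕ) % 2 = 0
      · have hj : (j : ℕ) + 1 < m := by
          have := i.2; have := j.2; omega
        refine Or.inr ⟨j, ⟨(j : ℕ) + 1, hj⟩, i, Or.inl ⟨rfl, h5⟩, ?_, Or.inr ⟨rfl, rfl⟩⟩
        intro h
        have hv := congrArg Fin.val h
        have him := i.2
        simp at hv
        omega
      · have h6 : 1 ≤ (j : ℕ) := by omega
        refine Or.inr ⟨j, ⟨(j : ℕ) - 1, by omega⟩, i, Or.inr ⟨by simp; omega, by simp; omega⟩,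
          ?_, Or.inr ⟨rfl, rfl⟩⟩
        intro h
        have hv := congrArg Fin.val h
        simp at hv
        omega
  · set p : Fin m := ⟨(i : ℕ) - 1, by omega⟩ with hp
    by_cases h4 : p = j
    · refine Or.inl (Or.inr ⟨?_, ?_⟩) <;> rw [← h4] <;> simp only [hp, Fin.val_mk] <;> omega
    · refine Or.inr ⟨i, p, j, Or.inr ⟨by simp only [hp, Fin.val_mk]; omega, by simp only [hp, Fin.val_mk]; omega⟩, h4, Or.inl ⟨rfl, rfl⟩⟩

lemma pairTY {i j : Fin m} (hij : i ≠ j) :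
    (TY i j ∨ TY j i) ∨
      (∃ k p o : Fin m, (TY k p ∨ TY p k) ∧ p ≠ o ∧
        ((k = i ∧ o = j) ∨ (k = j ∧ o = i))) ∨
      (m % 2 = 0 ∧ ((i : ℕ) = 0 ∧ (j : ℕ) = 1 ∨ (i : ℕ) = 1 ∧ (j : ℕ) = 0)) := by
  have hij' : (i : ℕ) ≠ (j : ℕ) := fun h => hij (Fin.ext h)
  have hi2 := i.2
  have hj2 := j.2
  -- whether i is covered
  by_cases hic : 1 ≤ (i : ℕ) ∧ ¬((i : ℕ) = 1 ∧ m % 2 = 0)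
  · -- i covered: construct partner of i
    by_cases hpar : (i : ℕ) % 2 = m % 2
    · have hlt : (i : ℕ) + 1 < m := by omega
      set p : Fin m := ⟨(i : ℕ) + 1, hlt⟩ with hp
      by_cases h4 : p = j
      · exact Or.inl (Or.inl ⟨by rw [← h4], hic.1, hpar⟩)
      · exact Or.inr (Or.inl ⟨i, p, j, Or.inl ⟨rfl, hic.1, hpar⟩, h4, Or.inl ⟨rfl, rfl⟩⟩)
    · have h6 : 2 ≤ (i : ℕ) := by omega
      set p : Fin m := ⟨(i : ℕ) - 1, by omega⟩ with hp
      by_cases h4 : p = j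
      · refine Or.inl (Or.inr ⟨?_, ?_, ?_⟩) <;> rw [← h4] <;> simp only [hp, Fin.val_mk] <;> omega
      · exact Or.inr (Or.inl ⟨i, p, j, Or.inr ⟨by simp only [hp, Fin.val_mk]; omega, by simp only [hp, Fin.val_mk]; omega, by simp only [hp, Fin.val_mk]; omega⟩,
          h4, Or.inl ⟨rfl, rfl⟩⟩)
  · by_cases hjc : 1 ≤ (j : ℕ) ∧ ¬((j : ℕ) = 1 ∧ m % 2 = 0)
    · by_cases hpar : (j : ℕ) % 2 = m % 2
      · have hlt : (j : ℕ) + 1 < m := by omega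
        set q : Fin m := ⟨(j : ℕ) + 1, hlt⟩ with hq
        have h4 : q ≠ i := by
          intro h
          have hv := congrArg Fin.val h
          simp only [hq, Fin.val_mk] at hv
          omega
        exact Or.inr (Or.inl ⟨j, q, i, Or.inl ⟨rfl, hjc.1, hpar⟩, h4, Or.inr ⟨rfl, rfl⟩⟩)
      · have h6 : 2 ≤ (j : ℕ) := by omega
        set q : Fin m := ⟨(j : ℕ) - 1, by omega⟩ with hq
        have h4 : q ≠ i := by
          intro h
          have hv := congrArg Fin.val h
          simp only [hq, Fin.val_mk] at hv
          omega
        exact Or.inr (Or.inl ⟨j, q, i, Or.inr ⟨by simp only [hq, Fin.val_mk]; omega, by simp only [hq, Fin.val_mk]; omega, by simp only [hq, Fin.val_mk]; omega⟩,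
          h4, Or.inr ⟨rfl, rfl⟩⟩)
    · refine Or.inr (Or.inr ⟨by omega, by omega⟩)

lemma MX_ne {i j : Fin m} (h : MX i j) : i ≠ j := by
  intro he; rw [he] at h; obtain ⟨h1, -⟩ := h; omega

lemma TY_ne {i j : Fin m} (h : TY i j) : i ≠ j := by
  intro he; rw [he] at h; obtain ⟨h1, -⟩ := h; omega

lemma maxS_key (B : Wm m) (hB : B ∉ setS hm x₁ y₁) :
    ∃ A ∈ setS hm x₁ y₁, (tokenGraph (twoCliquesPlusEdge m x₁ y₁) 2).Adj A B := by
  obtain ⟨u, v, huv, hBe⟩ := Finset.card_eq_two.1 B.2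
  rcases vx_or_vy hm x₁ y₁ u with ⟨i, rfl⟩ | ⟨i, rfl⟩ <;>
    rcases vx_or_vy hm x₁ y₁ v with ⟨j, rfl⟩ | ⟨j, rfl⟩
  · -- XX
    have hij : i ≠ j := fun h => huv (by rw [h])
    rcases pairMX hij with h | ⟨k, p, o, hkp, hpo, hko⟩
    · exfalso; apply hB
      rcases h with h | h
      · exact Or.inr (Or.inl ⟨i, j, h, hBe⟩)
      · exact Or.inr (Or.inl ⟨j, i, h, by rw [hBe, Finset.pair_comm]⟩)
    · have hkpne : k ≠ p := by rcases hkp with h | h; exacts [MX_ne h, (MX_ne h).symm]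
      refine ⟨⟨{vx hm x₁ k, vx hm x₁ p}, Finset.card_pair (by rwa [ne_eq, vx_inj])⟩, ?_, ?_⟩
      · rcases hkp with h | h
        · exact Or.inr (Or.inl ⟨k, p, h, rfl⟩)
        · exact Or.inr (Or.inl ⟨p, k, h, Finset.pair_comm _ _⟩)
      · refine token_adj_intro (vx hm x₁ k) (vx hm x₁ p) (vx hm x₁ o)
          ((adj_xx hm x₁ y₁).2 hpo) rfl ?_
        rcases hko with ⟨rfl, rfl⟩ | ⟨rfl, rfl⟩
        · exact hBe
        · rw [hBe, Finset.pair_comm]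
  · -- XY
    by_cases hij : i = j
    · exact absurd (Or.inl ⟨i, by rw [hBe, hij]⟩) hB
    · refine ⟨⟨{vx hm x₁ i, vy hm y₁ i}, Finset.card_pair (vx_ne_vy hm x₁ y₁)⟩,
        Or.inl ⟨i, rfl⟩, ?_⟩
      exact token_adj_intro _ _ _ ((adj_yy hm x₁ y₁).2 hij) rfl hBe
  · -- YX
    rw [Finset.pair_comm] at hBe
    by_cases hij : j = i
    · exact absurd (Or.inl ⟨j, by rw [hBe, hij]⟩) hB
    · refine ⟨⟨{vx hm x₁ j, vy hm y₁ j}, Finset.card_pair (vx_ne_vy hm x₁ y₁)⟩,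
        Or.inl ⟨j, rfl⟩, ?_⟩
      exact token_adj_intro _ _ _ ((adj_yy hm x₁ y₁).2 hij) rfl hBe
  · -- YY
    have hij : i ≠ j := fun h => huv (by rw [h])
    rcases pairMX hij with h | ⟨k, p, o, hkp, hpo, hko⟩
    · exfalso; apply hB
      rcases h with h | h
      · exact Or.inr (Or.inr ⟨i, j, h, hBe⟩)
      · exact Or.inr (Or.inr ⟨j, i, h, by rw [hBe, Finset.pair_comm]⟩)
    · have hkpne : k ≠ p := by rcases hkp with h | h; exacts [MX_ne h, (MX_ne h).symm]
      refine ⟨⟨{vy hm y₁ k, vy hm y₁ p}, Finset.card_pair (by rwa [ne_eq, vy_inj])⟩, ?_, ?_⟩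
      · rcases hkp with h | h
        · exact Or.inr (Or.inr ⟨k, p, h, rfl⟩)
        · exact Or.inr (Or.inr ⟨p, k, h, Finset.pair_comm _ _⟩)
      · refine token_adj_intro (vy hm y₁ k) (vy hm y₁ p) (vy hm y₁ o)
          ((adj_yy hm x₁ y₁).2 hpo) rfl ?_
        rcases hko with ⟨rfl, rfl⟩ | ⟨rfl, rfl⟩
        · exact hBe
        · rw [hBe, Finset.pair_comm]

lemma maxT_xy (B : Wm m) (hB : B ∉ setT hm x₁ y₁) (i j : Fin m)
    (hBe : B.1 = {vx hm x₁ i, vy hm y₁ j}) :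
    ∃ A ∈ setT hm x₁ y₁, (tokenGraph (twoCliquesPlusEdge m x₁ y₁) 2).Adj A B := by
  have hFT : ¬ FT i j := fun h => hB (Or.inl ⟨i, j, h, hBe⟩)
  by_cases hj0 : (j : ℕ) = 0
  · by_cases hi0 : (i : ℕ) = 0
    · refine ⟨⟨{vx hm x₁ i, vy hm y₁ (z1 hm)}, Finset.card_pair (vx_ne_vy hm x₁ y₁)⟩,
        Or.inl ⟨i, z1 hm, Or.inl ⟨hi0, z1_val hm⟩, rfl⟩, ?_⟩
      refine token_adj_intro (vx hm x₁ i) (vy hm y₁ (z1 hm)) (vy hm y₁ j)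
        ((adj_yy hm x₁ y₁).2 ?_) rfl hBe
      intro h
      have := congrArg Fin.val h
      rw [z1_val] at this
      omega
    · by_cases hi1 : (i : ℕ) = 1
      · refine ⟨⟨{vx hm x₁ (z0 hm), vx hm x₁ i}, Finset.card_pair ?_⟩, ?_, ?_⟩
        · rw [ne_eq, vx_inj]
          intro h
          have := congrArg Fin.val h
          rw [z0_val] at this
          omega
        · refine Or.inr (Or.inl ⟨z0 hm, i, ⟨?_, ?_⟩, rfl⟩) <;> rw [z0_val] <;> omega
        · refine token_adj_intro (vx hm x₁ i) (vx hm x₁ (z0 hm)) (vy hm y₁ j)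
            ((adj_xy hm x₁ y₁).2 ⟨rfl, Fin.ext (by rw [hj0, z0_val])⟩)
            (Finset.pair_comm _ _) hBe
      · -- 2 ≤ i
        refine ⟨⟨{vx hm x₁ i, vy hm y₁ i}, Finset.card_pair (vx_ne_vy hm x₁ y₁)⟩,
          Or.inl ⟨i, i, Or.inr ⟨by omega, rfl⟩, rfl⟩, ?_⟩
        refine token_adj_intro (vx hm x₁ i) (vy hm y₁ i) (vy hm y₁ j)
          ((adj_yy hm x₁ y₁).2 ?_) rfl hBe
        intro h
        have := congrArg Fin.val h
        omega
  · have hi' : (i : ℕ) ≠ 0 ∨ (j : ℕ) ≠ 1 := by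
      by_contra h
      push_neg at h
      exact hFT (Or.inl h)
    by_cases hj1 : (j : ℕ) = 1
    · have hi0' : (i : ℕ) ≠ 0 := by tauto
      refine ⟨⟨{vx hm x₁ (z0 hm), vy hm y₁ j}, Finset.card_pair (vx_ne_vy hm x₁ y₁)⟩,
        Or.inl ⟨z0 hm, j, Or.inl ⟨z0_val hm, hj1⟩, rfl⟩, ?_⟩
      refine token_adj_intro (vy hm y₁ j) (vx hm x₁ (z0 hm)) (vx hm x₁ i)
        ((adj_xx hm x₁ y₁).2 ?_) (Finset.pair_comm _ _) (by rw [hBe, Finset.pair_comm])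
      intro h
      have := congrArg Fin.val h
      rw [z0_val] at this
      omega
    · -- 2 ≤ j
      have hji : j ≠ i := by
        intro h
        exact hFT (Or.inr ⟨by omega, by rw [h]⟩)
      refine ⟨⟨{vx hm x₁ j, vy hm y₁ j}, Finset.card_pair (vx_ne_vy hm x₁ y₁)⟩,
        Or.inl ⟨j, j, Or.inr ⟨by omega, rfl⟩, rfl⟩, ?_⟩
      exact token_adj_intro (vy hm y₁ j) (vx hm x₁ j) (vx hm x₁ i)
        ((adj_xx hm x₁ y₁).2 hji) (Finset.pair_comm _ _) (by rw [hBe, Finset.pair_comm])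

lemma maxT_key (B : Wm m) (hB : B ∉ setT hm x₁ y₁) :
    ∃ A ∈ setT hm x₁ y₁, (tokenGraph (twoCliquesPlusEdge m x₁ y₁) 2).Adj A B := by
  obtain ⟨u, v, huv, hBe⟩ := Finset.card_eq_two.1 B.2
  rcases vx_or_vy hm x₁ y₁ u with ⟨i, rfl⟩ | ⟨i, rfl⟩ <;>
    rcases vx_or_vy hm x₁ y₁ v with ⟨j, rfl⟩ | ⟨j, rfl⟩
  · -- XX
    have hij : i ≠ j := fun h => huv (by rw [h])
    rcases pairMX hij with h | ⟨k, p, o, hkp, hpo, hko⟩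
    · exfalso; apply hB
      rcases h with h | h
      · exact Or.inr (Or.inl ⟨i, j, h, hBe⟩)
      · exact Or.inr (Or.inl ⟨j, i, h, by rw [hBe, Finset.pair_comm]⟩)
    · have hkpne : k ≠ p := by rcases hkp with h | h; exacts [MX_ne h, (MX_ne h).symm]
      refine ⟨⟨{vx hm x₁ k, vx hm x₁ p}, Finset.card_pair (by rwa [ne_eq, vx_inj])⟩, ?_, ?_⟩
      · rcases hkp with h | h
        · exact Or.inr (Or.inl ⟨k, p, h, rfl⟩)
        · exact Or.inr (Or.inl ⟨p, k, h, Finset.pair_comm _ _⟩)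
      · refine token_adj_intro (vx hm x₁ k) (vx hm x₁ p) (vx hm x₁ o)
          ((adj_xx hm x₁ y₁).2 hpo) rfl ?_
        rcases hko with ⟨rfl, rfl⟩ | ⟨rfl, rfl⟩
        · exact hBe
        · rw [hBe, Finset.pair_comm]
  · exact maxT_xy hm x₁ y₁ B hB i j hBe
  · exact maxT_xy hm x₁ y₁ B hB j i (by rw [hBe, Finset.pair_comm])
  · -- YY
    have hij : i ≠ j := fun h => huv (by rw [h])
    rcases pairTY hij with h | ⟨k, p, o, hkp, hpo, hko⟩ | ⟨hm2, hvals⟩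
    · exfalso; apply hB
      rcases h with h | h
      · exact Or.inr (Or.inr ⟨i, j, h, hBe⟩)
      · exact Or.inr (Or.inr ⟨j, i, h, by rw [hBe, Finset.pair_comm]⟩)
    · have hkpne : k ≠ p := by rcases hkp with h | h; exacts [TY_ne h, (TY_ne h).symm]
      refine ⟨⟨{vy hm y₁ k, vy hm y₁ p}, Finset.card_pair (by rwa [ne_eq, vy_inj])⟩, ?_, ?_⟩
      · rcases hkp with h | h
        · exact Or.inr (Or.inr ⟨k, p, h, rfl⟩)
        · exact Or.inr (Or.inr ⟨p, k, h, Finset.pair_comm _ _⟩)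
      · refine token_adj_intro (vy hm y₁ k) (vy hm y₁ p) (vy hm y₁ o)
          ((adj_yy hm x₁ y₁).2 hpo) rfl ?_
        rcases hko with ⟨rfl, rfl⟩ | ⟨rfl, rfl⟩
        · exact hBe
        · rw [hBe, Finset.pair_comm]
    · refine ⟨⟨{vx hm x₁ (z0 hm), vy hm y₁ (z1 hm)}, Finset.card_pair (vx_ne_vy hm x₁ y₁)⟩,
        Or.inl ⟨z0 hm, z1 hm, Or.inl ⟨z0_val hm, z1_val hm⟩, rfl⟩, ?_⟩
      rcases hvals with ⟨hi0, hj1⟩ | ⟨hi1, hj0⟩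
      · have hjz : j = z1 hm := Fin.ext (by rw [hj1, z1_val])
        subst hjz
        exact token_adj_intro (vy hm y₁ (z1 hm)) (vx hm x₁ (z0 hm)) (vy hm y₁ i)
          ((adj_xy hm x₁ y₁).2 ⟨rfl, Fin.ext (by rw [hi0, z0_val])⟩)
          (Finset.pair_comm _ _) (by rw [hBe, Finset.pair_comm])
      · have hiz : i = z1 hm := Fin.ext (by rw [hi1, z1_val])
        subst hiz
        exact token_adj_intro (vy hm y₁ (z1 hm)) (vx hm x₁ (z0 hm)) (vy hm y₁ j)
          ((adj_xy hm x₁ y₁).2 ⟨rfl, Fin.ext (by rw [hj0, z0_val])⟩)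
          (Finset.pair_comm _ _) hBe

lemma maximalS :
    Maximal (IndepSet (tokenGraph (twoCliquesPlusEdge m x₁ y₁) 2)) (setS hm x₁ y₁) := by
  refine ⟨indepS hm x₁ y₁, ?_⟩
  intro t ht hst B hBt
  by_contra hBS
  obtain ⟨A, hAS, hadj⟩ := maxS_key hm x₁ y₁ B hBS
  exact ht (hst hAS) hBt hadj.ne hadj

lemma maximalT :
    Maximal (IndepSet (tokenGraph (twoCliquesPlusEdge m x₁ y₁) 2)) (setT hm x₁ y₁) := by
  refine ⟨indepT hm x₁ y₁, ?_⟩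
  intro t ht hst B hBt
  by_contra hBS
  obtain ⟨A, hAS, hadj⟩ := maxT_key hm x₁ y₁ B hBS
  exact ht (hst hAS) hBt hadj.ne hadj

instance decMX {i j : Fin m} : Decidable (MX i j) := by unfold MX; infer_instance
instance decTY {i j : Fin m} : Decidable (TY i j) := by unfold TY; infer_instance
instance decFT {i j : Fin m} : Decidable (FT i j) := by unfold FT; infer_instance

lemma cardMX :
    (Finset.univ.filter (fun q : Fin m × Fin m => MX q.1 q.2)).card = m / 2 := by
  rw [← Finset.card_range (m / 2)]
  refine Finset.card_bij' (fun q _ => ((q.1 : Fin m) : ℕ) / 2)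
    (fun k hk => (⟨2 * k, by have := Finset.mem_range.1 hk; omega⟩,
      ⟨2 * k + 1, by have := Finset.mem_range.1 hk; omega⟩)) ?_ ?_ ?_ ?_
  · intro q hq
    rw [Finset.mem_filter] at hq
    obtain ⟨-, h1, h2⟩ := hq
    have := q.2.2
    simp only [Finset.mem_range]
    omega
  · intro k hk
    refine Finset.mem_filter.2 ⟨Finset.mem_univ _, ?_, ?_⟩ <;> simp <;> omega
  · intro q hq
    rw [Finset.mem_filter] at hq
    obtain ⟨-, h1, h2⟩ := hq
    refine Prod.ext ?_ ?_ <;> apply Fin.ext <;> simp <;> omega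
  · intro k hk
    first
    | (simp; omega)
    | simp

lemma cardTY :
    (Finset.univ.filter (fun q : Fin m × Fin m => TY q.1 q.2)).card = (m - 1) / 2 := by
  rw [← Finset.card_range ((m - 1) / 2)]
  refine Finset.card_bij' (fun q _ => (((q.1 : Fin m) : ℕ) - 1) / 2)
    (fun k hk => (⟨2 * k + 2 - m % 2, by have := Finset.mem_range.1 hk; omega⟩,
      ⟨2 * k + 3 - m % 2, by have := Finset.mem_range.1 hk; omega⟩)) ?_ ?_ ?_ ?_
  · intro q hq
    rw [Finset.mem_filter] at hq
    obtain ⟨-, h1, h2, h3⟩ := hq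
    have := q.2.2
    simp only [Finset.mem_range]
    omega
  · intro k hk
    have := Finset.mem_range.1 hk
    refine Finset.mem_filter.2 ⟨Finset.mem_univ _, ?_, ?_, ?_⟩ <;> simp <;> omega
  · intro q hq
    rw [Finset.mem_filter] at hq
    obtain ⟨-, h1, h2, h3⟩ := hq
    have := q.2.2
    refine Prod.ext ?_ ?_ <;> apply Fin.ext <;> simp <;> omega
  · intro k hk
    have := Finset.mem_range.1 hk
    first
    | (simp; omega)
    | simp

lemma cardFT (hm : 1 < m) :
    (Finset.univ.filter (fun q : Fin m × Fin m => FT q.1 q.2)).card = m - 1 := by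
  have hsplit : (Finset.univ.filter (fun q : Fin m × Fin m => FT q.1 q.2)) =
      insert (z0 hm, z1 hm)
        (Finset.univ.filter
          (fun q : Fin m × Fin m => 2 ≤ (q.1 : ℕ) ∧ (q.2 : ℕ) = (q.1 : ℕ))) := by
    ext q
    simp only [Finset.mem_filter, Finset.mem_insert, Finset.mem_univ, true_and, FT,
      Prod.ext_iff, Fin.ext_iff, z0_val, z1_val]
    try tauto
    exact Iff.intro (fun h => (Finset.mem_filter.1 h).2) (fun h => Finset.mem_filter.2 ⟨Finset.mem_univ _, h⟩)
  rw [hsplit, Finset.card_insert_of_notMem (by simp [z0_val, z1_val])]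
  have : (Finset.univ.filter
      (fun q : Fin m × Fin m => 2 ≤ (q.1 : ℕ) ∧ (q.2 : ℕ) = (q.1 : ℕ))).card = m - 2 := by
    rw [← Finset.card_range (m - 2)]
    refine Finset.card_bij' (fun q _ => ((q.1 : Fin m) : ℕ) - 2)
      (fun k hk => (⟨k + 2, by have := Finset.mem_range.1 hk; omega⟩,
        ⟨k + 2, by have := Finset.mem_range.1 hk; omega⟩)) ?_ ?_ ?_ ?_
    · intro q hq
      rw [Finset.mem_filter] at hq
      obtain ⟨-, h1, h2⟩ := hq
      have := q.1.2
      simp only [Finset.mem_range]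
      omega
    · intro k hk
      exact Finset.mem_filter.2 ⟨Finset.mem_univ _, by simp, by simp⟩
    · intro q hq
      rw [Finset.mem_filter] at hq
      obtain ⟨-, h1, h2⟩ := hq
      refine Prod.ext ?_ ?_ <;> apply Fin.ext <;> simp <;> omega
    · intro k hk
      simp
  rw [this]
  omega

def fS1 (i : Fin m) : Wm m := ⟨{vx hm x₁ i, vy hm y₁ i}, Finset.card_pair (vx_ne_vy hm x₁ y₁)⟩

def fS2 (q : {q : Fin m × Fin m // MX q.1 q.2}) : Wm m :=
  ⟨{vx hm x₁ q.1.1, vx hm x₁ q.1.2},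
    Finset.card_pair (by rw [ne_eq, vx_inj hm x₁]; exact MX_ne q.2)⟩

def fS3 (q : {q : Fin m × Fin m // MX q.1 q.2}) : Wm m :=
  ⟨{vy hm y₁ q.1.1, vy hm y₁ q.1.2},
    Finset.card_pair (by rw [ne_eq, vy_inj hm y₁]; exact MX_ne q.2)⟩

def fT1 (q : {q : Fin m × Fin m // FT q.1 q.2}) : Wm m :=
  ⟨{vx hm x₁ q.1.1, vy hm y₁ q.1.2}, Finset.card_pair (vx_ne_vy hm x₁ y₁)⟩

def fT3 (q : {q : Fin m × Fin m // TY q.1 q.2}) : Wm m :=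
  ⟨{vy hm y₁ q.1.1, vy hm y₁ q.1.2},
    Finset.card_pair (by rw [ne_eq, vy_inj hm y₁]; exact TY_ne q.2)⟩

lemma fS1_inj : Function.Injective (fS1 hm x₁ y₁) := by
  intro i j h
  have h' := congrArg Subtype.val h
  simp only [fS1, finpair_eq_iff, vx_inj, vy_inj, vx_eq_vy_iff, vy_eq_vx_iff] at h'
  tauto

lemma fS2_inj : Function.Injective (fS2 hm x₁) := by
  intro q r h
  have h' := congrArg Subtype.val h
  simp only [fS2, finpair_eq_iff, vx_inj] at h'
  rcases h' with ⟨h1, h2⟩ | ⟨h1, h2⟩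
  · exact Subtype.ext (Prod.ext h1 h2)
  · exfalso
    have a1 := q.2.1
    have b1 := r.2.1
    have c1 := congrArg Fin.val h1
    have c2 := congrArg Fin.val h2
    omega

lemma fS3_inj : Function.Injective (fS3 hm y₁) := by
  intro q r h
  have h' := congrArg Subtype.val h
  simp only [fS3, finpair_eq_iff, vy_inj] at h'
  rcases h' with ⟨h1, h2⟩ | ⟨h1, h2⟩
  · exact Subtype.ext (Prod.ext h1 h2)
  · exfalso
    have a1 := q.2.1
    have b1 := r.2.1
    have c1 := congrArg Fin.val h1
    have c2 := congrArg Fin.val h2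
    omega

lemma fT1_inj : Function.Injective (fT1 hm x₁ y₁) := by
  intro q r h
  have h' := congrArg Subtype.val h
  simp only [fT1, finpair_eq_iff, vx_inj, vy_inj, vx_eq_vy_iff, vy_eq_vx_iff] at h'
  rcases h' with ⟨h1, h2⟩ | ⟨h1, h2⟩
  · exact Subtype.ext (Prod.ext h1 h2)
  · exact absurd h1 (by simp)

lemma fT3_inj : Function.Injective (fT3 hm y₁) := by
  intro q r h
  have h' := congrArg Subtype.val h
  simp only [fT3, finpair_eq_iff, vy_inj] at h'
  rcases h' with ⟨h1, h2⟩ | ⟨h1, h2⟩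
  · exact Subtype.ext (Prod.ext h1 h2)
  · exfalso
    have a1 := q.2.1
    have b1 := r.2.1
    have c1 := congrArg Fin.val h1
    have c2 := congrArg Fin.val h2
    omega

lemma setS_eq : setS hm x₁ y₁ =
    Set.range (fS1 hm x₁ y₁) ∪ Set.range (fS2 hm x₁) ∪ Set.range (fS3 hm y₁) := by
  ext A
  simp only [setS, Set.mem_setOf_eq, Set.mem_union, Set.mem_range]
  constructor
  · rintro (⟨i, hA⟩ | ⟨i, j, hij, hA⟩ | ⟨i, j, hij, hA⟩)
    · exact Or.inl (Or.inl ⟨i, Subtype.ext hA.symm⟩)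
    · exact Or.inl (Or.inr ⟨⟨(i, j), hij⟩, Subtype.ext hA.symm⟩)
    · exact Or.inr ⟨⟨(i, j), hij⟩, Subtype.ext hA.symm⟩
  · rintro ((⟨i, hA⟩ | ⟨q, hA⟩) | ⟨q, hA⟩)
    · exact Or.inl ⟨i, by rw [← hA]; rfl⟩
    · exact Or.inr (Or.inl ⟨q.1.1, q.1.2, q.2, by rw [← hA]; rfl⟩)
    · exact Or.inr (Or.inr ⟨q.1.1, q.1.2, q.2, by rw [← hA]; rfl⟩)

lemma setT_eq : setT hm x₁ y₁ =
    Set.range (fT1 hm x₁ y₁) ∪ Set.range (fS2 hm x₁) ∪ Set.range (fT3 hm y₁) := by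
  ext A
  simp only [setT, Set.mem_setOf_eq, Set.mem_union, Set.mem_range]
  constructor
  · rintro (⟨i, j, hij, hA⟩ | ⟨i, j, hij, hA⟩ | ⟨i, j, hij, hA⟩)
    · exact Or.inl (Or.inl ⟨⟨(i, j), hij⟩, Subtype.ext hA.symm⟩)
    · exact Or.inl (Or.inr ⟨⟨(i, j), hij⟩, Subtype.ext hA.symm⟩)
    · exact Or.inr ⟨⟨(i, j), hij⟩, Subtype.ext hA.symm⟩
  · rintro ((⟨q, hA⟩ | ⟨q, hA⟩) | ⟨q, hA⟩)
    · exact Or.inl ⟨q.1.1, q.1.2, q.2, by rw [← hA]; rfl⟩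
    · exact Or.inr (Or.inl ⟨q.1.1, q.1.2, q.2, by rw [← hA]; rfl⟩)
    · exact Or.inr (Or.inr ⟨q.1.1, q.1.2, q.2, by rw [← hA]; rfl⟩)

lemma ncard_range_eq {α : Type*} {β : Type*} [Fintype α] (f : α → β)
    (hf : Function.Injective f) : (Set.range f).ncard = Fintype.card α := by
  rw [← Nat.card_coe_set_eq, Nat.card_range_of_injective hf, Nat.card_eq_fintype_card]

lemma ncardS : (setS hm x₁ y₁).ncard = m + m / 2 + m / 2 := by
  rw [setS_eq hm x₁ y₁]
  have d12 : Disjoint (Set.range (fS1 hm x₁ y₁)) (Set.range (fS2 hm x₁)) := by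
    rw [Set.disjoint_left]
    rintro A ⟨i, rfl⟩ ⟨q, hq⟩
    have h' := congrArg Subtype.val hq
    simp [fS1, fS2, finpair_eq_iff, vx_inj, vy_inj, vx_eq_vy_iff, vy_eq_vx_iff] at h'
  have d13 : Disjoint (Set.range (fS1 hm x₁ y₁)) (Set.range (fS3 hm y₁)) := by
    rw [Set.disjoint_left]
    rintro A ⟨i, rfl⟩ ⟨q, hq⟩
    have h' := congrArg Subtype.val hq
    simp [fS1, fS3, finpair_eq_iff, vx_inj, vy_inj, vx_eq_vy_iff, vy_eq_vx_iff] at h'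
  have d23 : Disjoint (Set.range (fS2 hm x₁)) (Set.range (fS3 hm y₁)) := by
    rw [Set.disjoint_left]
    rintro A ⟨q, rfl⟩ ⟨r, hr⟩
    have h' := congrArg Subtype.val hr
    simp [fS2, fS3, finpair_eq_iff, vx_inj, vy_inj, vx_eq_vy_iff, vy_eq_vx_iff] at h'
  rw [Set.ncard_union_eq (Set.disjoint_union_left.2 ⟨d13, d23⟩),
    Set.ncard_union_eq d12,
    ncard_range_eq _ (fS1_inj hm x₁ y₁), ncard_range_eq _ (fS2_inj hm x₁),
    ncard_range_eq _ (fS3_inj hm y₁), Fintype.card_fin,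
    Fintype.card_subtype, cardMX]

lemma ncardT : (setT hm x₁ y₁).ncard = (m - 1) + m / 2 + (m - 1) / 2 := by
  rw [setT_eq hm x₁ y₁]
  have d12 : Disjoint (Set.range (fT1 hm x₁ y₁)) (Set.range (fS2 hm x₁)) := by
    rw [Set.disjoint_left]
    rintro A ⟨i, rfl⟩ ⟨q, hq⟩
    have h' := congrArg Subtype.val hq
    simp [fT1, fS2, finpair_eq_iff, vx_inj, vy_inj, vx_eq_vy_iff, vy_eq_vx_iff] at h'
  have d13 : Disjoint (Set.range (fT1 hm x₁ y₁)) (Set.range (fT3 hm y₁)) := by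
    rw [Set.disjoint_left]
    rintro A ⟨i, rfl⟩ ⟨q, hq⟩
    have h' := congrArg Subtype.val hq
    simp [fT1, fT3, finpair_eq_iff, vx_inj, vy_inj, vx_eq_vy_iff, vy_eq_vx_iff] at h'
  have d23 : Disjoint (Set.range (fS2 hm x₁)) (Set.range (fT3 hm y₁)) := by
    rw [Set.disjoint_left]
    rintro A ⟨q, rfl⟩ ⟨r, hr⟩
    have h' := congrArg Subtype.val hr
    simp [fS2, fT3, finpair_eq_iff, vx_inj, vy_inj, vx_eq_vy_iff, vy_eq_vx_iff] at h'
  rw [Set.ncard_union_eq (Set.disjoint_union_left.2 ⟨d13, d23⟩),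
    Set.ncard_union_eq d12,
    ncard_range_eq _ (fT1_inj hm x₁ y₁), ncard_range_eq _ (fS2_inj hm x₁),
    ncard_range_eq _ (fT3_inj hm y₁),
    Fintype.card_subtype, Fintype.card_subtype, Fintype.card_subtype,
    cardMX, cardTY, cardFT hm]

end Main

theorem stmt19 (m : ℕ) (hm : 1 < m) (x₁ y₁ : Fin m) :
    ¬ WellCovered (tokenGraph (twoCliquesPlusEdge m x₁ y₁) 2) := by
  intro h
  have heq := h _ _ (maximalS hm x₁ y₁) (maximalT hm x₁ y₁)
  rw [ncardS hm x₁ y₁, ncardT hm x₁ y₁] at heq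
  omega
end
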